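/- arXiv:2410.12590 — 9 statements merged into one kernel-verified Lean document; each statement's English description precedes it below -/
import Mathlib

section
/- Let (Ω, 𝓕, μ) be a standard Borel probability space, S : Ω → ℝ a random variable taking values in {0,1}, A : Ω → ℝ a random variable, Z : Ω → ℝ^d a measurable map, and κ : ℝ^d → ℝ measurable with c ≤ κ(z) ≤ 1 for all z, for some constant c > 0, such that κ ∘ Z is a version of E[S | σ(Z)]. If S is conditionally independent of A given σ(Z), then for every bounded measurable h : ℝ × ℝ^d → ℝ, E[(S/κ(Z)) · h(A, Z)] = E[h(A, Z)]. (This is the key inverse-probability-of-sampling-weighting identity behind Theorem 2, part 1.) -/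
open MeasureTheory ProbabilityTheory

/-- IPSW identity: if κ ∘ Z is a version of E[S | σ(Z)], c ≤ κ ≤ 1 with c > 0, and S is
conditionally independent of A given σ(Z), then for every bounded measurable h,
E[(S/κ(Z))·h(A, Z)] = E[h(A, Z)]. -/
theorem ipsw_identity
    {Ω : Type*} [MeasurableSpace Ω] [StandardBorelSpace Ω]
    (μ : Measure Ω) [IsProbabilityMeasure μ]
    {d : ℕ} (S A : Ω → ℝ) (Z : Ω → (Fin d → ℝ)) (κ : (Fin d → ℝ) → ℝ) (c : ℝ)
    (hS : Measurable S) (hSval : ∀ ω, S ω = 0 ∨ S ω = 1)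
    (hA : Measurable A) (hZ : Measurable Z) (hκ : Measurable κ)
    (hc : 0 < c) (hκlb : ∀ z, c ≤ κ z) (hκub : ∀ z, κ z ≤ 1)
    (hκver : (fun ω => κ (Z ω)) =ᵐ[μ] μ[S | MeasurableSpace.comap Z inferInstance])
    (hCI : CondIndep (MeasurableSpace.comap Z inferInstance)
      (MeasurableSpace.comap S inferInstance)
      (MeasurableSpace.comap A inferInstance)
      hZ.comap_le μ) :
    ∀ (h : ℝ × (Fin d → ℝ) → ℝ), Measurable h → (∃ M, ∀ x, |h x| ≤ M) →
      ∫ ω, (S ω / κ (Z ω)) * h (A ω, Z ω) ∂μ = ∫ ω, h (A ω, Z ω) ∂μ := by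
  have hG := hZ.comap_le
  have hκZpos : ∀ ω, 0 < κ (Z ω) := fun ω => lt_of_lt_of_le hc (hκlb _)
  have hSmem : ∀ ω, 0 ≤ S ω ∧ S ω ≤ 1 := by
    intro ω; rcases hSval ω with h | h <;> simp [h]
  set w : Ω → ℝ := fun ω => S ω / κ (Z ω) with hwdef
  have hw_meas : Measurable w := hS.div (hκ.comp hZ)
  have hw_nn : ∀ ω, 0 ≤ w ω := fun ω => div_nonneg (hSmem ω).1 (hκZpos ω).le
  have hw_bd : ∀ ω, |w ω| ≤ 1 / c := by
    intro ω
    rw [hwdef, abs_of_nonneg (hw_nn ω)]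
    exact div_le_div₀ (by positivity) (hSmem ω).2 hc (hκlb _)
  have intb : ∀ (g : Ω → ℝ), AEStronglyMeasurable g μ → (∃ M, ∀ ω, |g ω| ≤ M) →
      Integrable g μ := by
    rintro g hg ⟨M, hM⟩
    exact ⟨hg, HasFiniteIntegral.of_bounded (C := M) (ae_of_all _ fun ω => by
      simpa [Real.norm_eq_abs] using hM ω)⟩
  have hZG : Measurable[MeasurableSpace.comap Z inferInstance] Z := measurable_iff_comap_le.mpr le_rfl
  have hκZG : Measurable[(MeasurableSpace.comap Z inferInstance)] fun ω => κ (Z ω) := hκ.comp hZG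
  have hiS : (S ⁻¹' {1}).indicator (fun _ => (1:ℝ)) = S := by
    funext ω; rcases hSval ω with h | h <;> simp [Set.indicator_apply, h]
  -- key rectangle identity
  have key : ∀ s : Set ℝ, MeasurableSet s → ∀ t : Set (Fin d → ℝ), MeasurableSet t →
      ∫ ω in A ⁻¹' s ∩ Z ⁻¹' t, w ω ∂μ = (μ (A ⁻¹' s ∩ Z ⁻¹' t)).toReal := by
    intro s hs t ht
    set indT : Ω → ℝ := (Z ⁻¹' t).indicator (fun _ => (1:ℝ)) with hindTdef
    set ind2 : Ω → ℝ := (A ⁻¹' s).indicator (fun _ => (1:ℝ)) with hind2def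
    set f : Ω → ℝ := fun ω => indT ω / κ (Z ω) with hfdef
    set g : Ω → ℝ := fun ω => S ω * ind2 ω with hgdef
    have htG : MeasurableSet[(MeasurableSpace.comap Z inferInstance)] (Z ⁻¹' t) := ⟨t, ht, rfl⟩
    have hindT_G : Measurable[(MeasurableSpace.comap Z inferInstance)] indT := measurable_const.indicator htG
    have hfG : StronglyMeasurable[(MeasurableSpace.comap Z inferInstance)] f := (hindT_G.div hκZG).stronglyMeasurable
    have hindT_meas : Measurable indT := measurable_const.indicator (hZ ht)
    have hind2_meas : Measurable ind2 := measurable_const.indicator (hA hs)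
    have hindT_bd : ∀ ω, |indT ω| ≤ 1 := by
      intro ω; rw [hindTdef]; by_cases h2 : Z ω ∈ t <;> simp [Set.indicator_apply, h2]
    have hind2_bd : ∀ ω, |ind2 ω| ≤ 1 := by
      intro ω; rw [hind2def]; by_cases h1 : A ω ∈ s <;> simp [Set.indicator_apply, h1]
    have hf_bd : ∀ ω, ‖f ω‖ ≤ 1 / c := by
      intro ω
      rw [Real.norm_eq_abs, hfdef, abs_div, abs_of_pos (hκZpos ω)]
      exact div_le_div₀ (by positivity) (hindT_bd ω) hc (hκlb _)
    have hg_bd : ∀ ω, |g ω| ≤ 1 := by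
      intro ω
      rw [hgdef, abs_mul]
      calc |S ω| * |ind2 ω| ≤ 1 * 1 := by
            refine mul_le_mul ?_ (hind2_bd ω) (abs_nonneg _) zero_le_one
            rw [abs_of_nonneg (hSmem ω).1]; exact (hSmem ω).2
        _ = 1 := by norm_num
    have hg_int : Integrable g μ :=
      intb g (hS.mul hind2_meas).aestronglyMeasurable ⟨1, hg_bd⟩
    have hfg_int : Integrable (f * g) μ := by
      refine intb _ (((hindT_meas.div (hκ.comp hZ)).mul (hS.mul hind2_meas)).aestronglyMeasurable) ⟨1/c, fun ω => ?_⟩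
      calc |(f * g) ω| = |f ω| * |g ω| := abs_mul _ _
        _ ≤ (1/c) * 1 := by
            refine mul_le_mul ?_ (hg_bd ω) (abs_nonneg _) (by positivity)
            simpa [Real.norm_eq_abs] using hf_bd ω
        _ = 1/c := by ring
    have hg_eq : g = (S ⁻¹' {1} ∩ A ⁻¹' s).indicator (fun _ => (1:ℝ)) := by
      funext ω
      by_cases hAs : A ω ∈ s <;> rcases hSval ω with h | h <;>
        simp [hgdef, hind2def, Set.indicator_apply, Set.mem_inter_iff, Set.mem_preimage, h, hAs]
    have hCI' := (condIndep_iff (MeasurableSpace.comap Z inferInstance) (MeasurableSpace.comap S inferInstance)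
        (MeasurableSpace.comap A inferInstance) hG hS.comap_le hA.comap_le μ).mp hCI
        (S ⁻¹' {1}) (A ⁻¹' s) ⟨{1}, measurableSet_singleton 1, rfl⟩ ⟨s, hs, rfl⟩
    have hE : MeasurableSet (A ⁻¹' s ∩ Z ⁻¹' t) := (hA hs).inter (hZ ht)
    have step0 : ∫ ω in A ⁻¹' s ∩ Z ⁻¹' t, w ω ∂μ = ∫ ω, (f * g) ω ∂μ := by
      rw [← integral_indicator hE]
      refine integral_congr_ae (ae_of_all _ fun ω => ?_)
      by_cases h1 : A ω ∈ s <;> by_cases h2 : Z ω ∈ t <;>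
        simp [Set.indicator_apply, Set.mem_inter_iff, Set.mem_preimage, h1, h2,
          hwdef, hfdef, hgdef, hindTdef, hind2def] <;> ring
    have pull1 : μ[f * g|(MeasurableSpace.comap Z inferInstance)] =ᵐ[μ] f * μ[g|(MeasurableSpace.comap Z inferInstance)] :=
      condExp_stronglyMeasurable_mul_of_bound hG hfG hg_int (1/c) (ae_of_all _ hf_bd)
    have step1 : ∫ ω, (f * g) ω ∂μ = ∫ ω, (f * μ[g|(MeasurableSpace.comap Z inferInstance)]) ω ∂μ := by
      rw [← integral_condExp hG (f := f * g)]
      exact integral_congr_ae pull1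
    have hcondS : μ[S|(MeasurableSpace.comap Z inferInstance)] =ᵐ[μ] fun ω => κ (Z ω) := hκver.symm
    have hcg : μ[g|(MeasurableSpace.comap Z inferInstance)] =ᵐ[μ] fun ω => κ (Z ω) * (μ[ind2|(MeasurableSpace.comap Z inferInstance)]) ω := by
      rw [hg_eq]
      refine hCI'.trans ?_
      have h1 : μ[(S ⁻¹' {1}).indicator (fun _ => (1:ℝ))|(MeasurableSpace.comap Z inferInstance)] =ᵐ[μ] fun ω => κ (Z ω) := by
        rw [hiS]; exact hcondS
      filter_upwards [h1] with ω hω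
      simp only [Pi.mul_apply, hω]
      rfl
    have step2 : ∫ ω, (f * μ[g|(MeasurableSpace.comap Z inferInstance)]) ω ∂μ = ∫ ω, (indT * μ[ind2|(MeasurableSpace.comap Z inferInstance)]) ω ∂μ := by
      refine integral_congr_ae ?_
      filter_upwards [hcg] with ω hω
      simp only [Pi.mul_apply, hω, hfdef]
      rw [div_mul_eq_mul_div, div_eq_iff (hκZpos ω).ne']
      ring
    have hind2_int : Integrable ind2 μ := intb _ hind2_meas.aestronglyMeasurable ⟨1, hind2_bd⟩
    have pull2 : μ[indT * ind2|(MeasurableSpace.comap Z inferInstance)] =ᵐ[μ] indT * μ[ind2|(MeasurableSpace.comap Z inferInstance)] :=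
      condExp_stronglyMeasurable_mul_of_bound hG hindT_G.stronglyMeasurable hind2_int 1
        (ae_of_all _ fun ω => by simpa [Real.norm_eq_abs] using hindT_bd ω)
    have hTi_int : Integrable (indT * ind2) μ := by
      refine intb _ ((hindT_meas.mul hind2_meas).aestronglyMeasurable) ⟨1, fun ω => ?_⟩
      calc |(indT * ind2) ω| = |indT ω| * |ind2 ω| := abs_mul _ _
        _ ≤ 1 * 1 := mul_le_mul (hindT_bd ω) (hind2_bd ω) (abs_nonneg _) zero_le_one
        _ = 1 := by norm_num
    have step3 : ∫ ω, (indT * μ[ind2|(MeasurableSpace.comap Z inferInstance)]) ω ∂μ = ∫ ω, (indT * ind2) ω ∂μ := by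
      rw [← integral_condExp hG (f := indT * ind2)]
      exact integral_congr_ae pull2.symm
    have step4 : ∫ ω, (indT * ind2) ω ∂μ = (μ (A ⁻¹' s ∩ Z ⁻¹' t)).toReal := by
      have heq : ∀ ω, (indT * ind2) ω = (A ⁻¹' s ∩ Z ⁻¹' t).indicator (1 : Ω → ℝ) ω := by
        intro ω
        by_cases h1 : A ω ∈ s <;> by_cases h2 : Z ω ∈ t <;>
          simp [Set.indicator_apply, Set.mem_inter_iff, Set.mem_preimage, h1, h2,
            hindTdef, hind2def]
      rw [integral_congr_ae (ae_of_all _ heq), integral_indicator_one hE]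
      rfl
    rw [step0, step1, step2, step3, step4]
  -- the reweighted measure
  set wnn : Ω → NNReal := fun ω => Real.toNNReal (w ω) with hwnndef
  have hwnn_meas : Measurable wnn := measurable_real_toNNReal.comp hw_meas
  set ν : Measure Ω := μ.withDensity (fun ω => (wnn ω : ENNReal)) with hνdef
  have hw_int : Integrable w μ := intb _ hw_meas.aestronglyMeasurable ⟨1/c, hw_bd⟩
  have hν_apply : ∀ E : Set Ω, MeasurableSet E → ν E = ENNReal.ofReal (∫ ω in E, w ω ∂μ) := by
    intro E hE
    rw [hνdef, withDensity_apply _ hE,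
      ofReal_integral_eq_lintegral_ofReal hw_int.restrict (ae_of_all _ hw_nn)]
    rfl
  have hp : Measurable fun ω => (A ω, Z ω) := hA.prodMk hZ
  have hνuniv : ν Set.univ = 1 := by
    have h0 := key Set.univ MeasurableSet.univ Set.univ MeasurableSet.univ
    simp only [Set.preimage_univ, Set.univ_inter] at h0
    rw [hν_apply _ MeasurableSet.univ, h0, measure_univ]
    simp
  have hνprob : IsProbabilityMeasure ν := ⟨hνuniv⟩
  have hmap : ν.map (fun ω => (A ω, Z ω)) = μ.map (fun ω => (A ω, Z ω)) := by
    refine ext_of_generate_finite _ generateFrom_prod.symm isPiSystem_prod ?_ ?_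
    · rintro u ⟨s, hs, t, ht, rfl⟩
      simp only [Set.mem_setOf_eq] at hs ht
      rw [Measure.map_apply hp (hs.prod ht), Measure.map_apply hp (hs.prod ht),
        Set.mk_preimage_prod, hν_apply _ ((hA hs).inter (hZ ht)), key s hs t ht,
        ENNReal.ofReal_toReal (measure_ne_top μ _)]
    · rw [Measure.map_apply hp MeasurableSet.univ, Measure.map_apply hp MeasurableSet.univ,
        Set.preimage_univ, hνuniv, measure_univ]
  rintro h hmeas ⟨M, hM⟩
  calc ∫ ω, (S ω / κ (Z ω)) * h (A ω, Z ω) ∂μ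
      = ∫ ω, wnn ω • h (A ω, Z ω) ∂μ := by
        refine integral_congr_ae (ae_of_all _ fun ω => ?_)
        simp [NNReal.smul_def, hwnndef, Real.coe_toNNReal _ (hw_nn ω), hwdef]
        exact Or.inl (div_nonneg (hSmem ω).1 (hκZpos ω).le)
    _ = ∫ ω, h (A ω, Z ω) ∂ν := (integral_withDensity_eq_integral_smul hwnn_meas _).symm
    _ = ∫ x, h x ∂(ν.map (fun ω => (A ω, Z ω))) :=
        (integral_map hp.aemeasurable hmeas.aestronglyMeasurable).symm
    _ = ∫ x, h x ∂(μ.map (fun ω => (A ω, Z ω))) := by rw [hmap]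
    _ = ∫ ω, h (A ω, Z ω) ∂μ := integral_map hp.aemeasurable hmeas.aestronglyMeasurable
end

section
/- Let (Ω, 𝓕, μ) be a standard Borel probability space. Let A : Ω → ℝ take values in {0,1}, let Y₁, Y₀ be bounded real-valued random variables, set Y = A·Y₁ + (1 − A)·Y₀ (consistency), let X : Ω → ℝ^d be measurable, and suppose Y₁ is conditionally independent of A given σ(X) (unconfoundedness). Let g : ℝ^d → ℝ be measurable with c ≤ g(x) ≤ 1 − c for all x, for some 0 < c < 1/2, such that g ∘ X is a version of E[A | σ(X)] (positivity). Then E[A·Y / g(X)] = E[Y₁]. (Inverse-probability-weighting identification of the counterfactual mean.) -/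
open MeasureTheory ProbabilityTheory

theorem ipw_aux {Ω : Type*} {m mY mA mΩ : MeasurableSpace Ω} [StandardBorelSpace Ω]
    (μ : Measure Ω) [IsProbabilityMeasure μ]
    (hm : m ≤ mΩ) (hmY : mY ≤ mΩ) (hmA : mA ≤ mΩ)
    (hCI : CondIndep m mY mA hm μ)
    (Y₁ h p : Ω → ℝ) (S : Set Ω)
    (hY₁sm : StronglyMeasurable[mY] Y₁)
    (M : ℝ) (hM : ∀ ω, |Y₁ ω| ≤ M)
    (hhsm : StronglyMeasurable[m] h) (hpsm : StronglyMeasurable[m] p)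
    (Ch : ℝ) (hhabs : ∀ ω, |h ω| ≤ Ch) (hpabs : ∀ ω, |p ω| ≤ 1)
    (hhp : ∀ ω, h ω * p ω = 1)
    (hS : MeasurableSet[mA] S)
    (hpW : μ[Set.indicator S (fun _ => (1:ℝ))|m] =ᵐ[μ] p) :
    ∫ ω, (Y₁ * (h * Set.indicator S (fun _ => (1:ℝ)))) ω ∂μ = ∫ ω, Y₁ ω ∂μ := by
  haveI : SigmaFinite (μ.trim hm) := inferInstance
  haveI : SigmaFinite (μ.trim hmY) := inferInstance
  set W : Ω → ℝ := Set.indicator S (fun _ => (1:ℝ)) with hW_def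
  have hSΩ : MeasurableSet S := hmA S hS
  have hY₁ : Measurable Y₁ := (hY₁sm.mono hmY).measurable
  have hhmeas : Measurable h := (hhsm.mono hm).measurable
  have hpmeas : Measurable p := (hpsm.mono hm).measurable
  have hWmeas : Measurable W := measurable_const.indicator hSΩ
  have hWabs : ∀ ω, |W ω| ≤ 1 := by
    intro ω
    by_cases hω : ω ∈ S <;> simp [hW_def, Set.indicator_apply, hω]
  -- integrability helper
  have intbdd : ∀ (f : Ω → ℝ) (C : ℝ), Measurable f → (∀ ω, |f ω| ≤ C) → Integrable f μ := by
    intro f C hf hb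
    exact ⟨hf.aestronglyMeasurable,
      HasFiniteIntegral.of_bounded (C := C) (ae_of_all _ (by simpa [Real.norm_eq_abs] using hb))⟩
  have mulabs : ∀ (u v : Ω → ℝ) (Cu Cv : ℝ), (∀ ω, |u ω| ≤ Cu) → (∀ ω, |v ω| ≤ Cv) →
      ∀ ω, |(u * v) ω| ≤ Cu * Cv := by
    intro u v Cu Cv hu hv ω
    show |u ω * v ω| ≤ Cu * Cv
    rw [abs_mul]
    exact mul_le_mul (hu ω) (hv ω) (abs_nonneg _) (le_trans (abs_nonneg _) (hu ω))
  have int_hW : Integrable (h * W) μ :=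
    intbdd _ (Ch * 1) (hhmeas.mul hWmeas) (mulabs _ _ _ _ hhabs hWabs)
  have int_hp : Integrable (h * p) μ :=
    intbdd _ (Ch * 1) (hhmeas.mul hpmeas) (mulabs _ _ _ _ hhabs hpabs)
  have int_Y₁hW : Integrable (Y₁ * (h * W)) μ :=
    intbdd _ (M * (Ch * 1)) (hY₁.mul (hhmeas.mul hWmeas))
      (mulabs _ _ _ _ hM (mulabs _ _ _ _ hhabs hWabs))
  have int_Y₁hp : Integrable (Y₁ * (h * p)) μ :=
    intbdd _ (M * (Ch * 1)) (hY₁.mul (hhmeas.mul hpmeas))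
      (mulabs _ _ _ _ hM (mulabs _ _ _ _ hhabs hpabs))
  -- the key set-integral identity
  have claim_sets : ∀ t : Set Ω, MeasurableSet[mY] t →
      ∫ ω in t, (h * W) ω ∂μ = ∫ ω in t, (h * p) ω ∂μ := by
    intro t ht
    have htΩ : MeasurableSet t := hmY t ht
    have hRHS : ∫ ω in t, (h * p) ω ∂μ = (μ t).toReal := by
      have hone : (h * p) = fun _ => (1:ℝ) := funext fun ω => hhp ω
      rw [hone]
      simp
      rfl
    rw [hRHS]
    set ind : Ω → ℝ := Set.indicator (t ∩ S) (fun _ => (1:ℝ)) with hind_def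
    have hindmeas : Measurable ind := measurable_const.indicator (htΩ.inter hSΩ)
    have hindabs : ∀ ω, |ind ω| ≤ 1 := by
      intro ω; by_cases hω : ω ∈ t ∩ S <;> simp [hind_def, Set.indicator_apply, hω]
    have hrw : Set.indicator t (h * W) = h * ind := by
      funext ω
      by_cases hω : ω ∈ t
      · by_cases hω' : ω ∈ S <;>
          simp [hind_def, hW_def, Set.indicator_apply, hω, hω', Set.mem_inter_iff]
      · simp [hind_def, hW_def, Set.indicator_apply, hω, Set.mem_inter_iff]
    rw [← integral_indicator htΩ, hrw]
    have int_ind : Integrable ind μ := intbdd _ 1 hindmeas hindabs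
    have int_hind : Integrable (h * ind) μ :=
      intbdd _ (Ch * 1) (hhmeas.mul hindmeas) (mulabs _ _ _ _ hhabs hindabs)
    have pull : μ[h * ind|m] =ᵐ[μ] h * μ[ind|m] :=
      condExp_mul_of_stronglyMeasurable_left hhsm int_hind int_ind
    have hfac : (μ⟦t ∩ S|m⟧) =ᵐ[μ] (μ⟦t|m⟧) * (μ⟦S|m⟧) :=
      (condIndep_iff m mY mA hm hmY hmA μ).mp hCI t S ht hS
    have step : (h * μ[ind|m]) =ᵐ[μ] (μ⟦t|m⟧) := by
      have h1 : μ[ind|m] = μ⟦t ∩ S|m⟧ := rfl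
      filter_upwards [hfac, hpW] with ω hω hω'
      show h ω * (μ[ind|m]) ω = (μ⟦t|m⟧) ω
      rw [h1, hω]
      show h ω * ((μ⟦t|m⟧) ω * (μ[W|m]) ω) = (μ⟦t|m⟧) ω
      rw [hω']
      calc h ω * ((μ⟦t|m⟧) ω * p ω) = (μ⟦t|m⟧) ω * (h ω * p ω) := by ring
        _ = (μ⟦t|m⟧) ω := by rw [hhp ω]; ring
    calc ∫ ω, (h * ind) ω ∂μ
        = ∫ ω, (μ[h * ind|m]) ω ∂μ := (integral_condExp hm).symm
      _ = ∫ ω, (h * μ[ind|m]) ω ∂μ := integral_congr_ae pull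
      _ = ∫ ω, (μ⟦t|m⟧) ω ∂μ := integral_congr_ae step
      _ = ∫ ω, Set.indicator t (fun _ => (1:ℝ)) ω ∂μ := integral_condExp hm
      _ = (μ t).toReal := by
          rw [integral_indicator htΩ]
          simp
          rfl
  -- equality of conditional expectations given mY
  have hcondeq : μ[h * W|mY] =ᵐ[μ] μ[h * p|mY] :=
    ae_eq_of_forall_setIntegral_eq_of_sigmaFinite' hmY
      (fun s _ _ => integrable_condExp.integrableOn)
      (fun s _ _ => integrable_condExp.integrableOn)
      (fun s hs _ => by
        rw [setIntegral_condExp hmY int_hW hs, setIntegral_condExp hmY int_hp hs]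
        exact claim_sets s hs)
      stronglyMeasurable_condExp.aestronglyMeasurable
      stronglyMeasurable_condExp.aestronglyMeasurable
  have pull1 : μ[Y₁ * (h * W)|mY] =ᵐ[μ] Y₁ * μ[h * W|mY] :=
    condExp_mul_of_stronglyMeasurable_left hY₁sm int_Y₁hW int_hW
  have pull2 : μ[Y₁ * (h * p)|mY] =ᵐ[μ] Y₁ * μ[h * p|mY] :=
    condExp_mul_of_stronglyMeasurable_left hY₁sm int_Y₁hp int_hp
  calc ∫ ω, (Y₁ * (h * W)) ω ∂μ
      = ∫ ω, (μ[Y₁ * (h * W)|mY]) ω ∂μ := (integral_condExp hmY).symm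
    _ = ∫ ω, (Y₁ * μ[h * W|mY]) ω ∂μ := integral_congr_ae pull1
    _ = ∫ ω, (Y₁ * μ[h * p|mY]) ω ∂μ := by
        refine integral_congr_ae ?_
        filter_upwards [hcondeq] with ω hω
        show Y₁ ω * (μ[h * W|mY]) ω = Y₁ ω * (μ[h * p|mY]) ω
        rw [hω]
    _ = ∫ ω, (μ[Y₁ * (h * p)|mY]) ω ∂μ := (integral_congr_ae pull2).symm
    _ = ∫ ω, (Y₁ * (h * p)) ω ∂μ := integral_condExp hmY
    _ = ∫ ω, Y₁ ω ∂μ := by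
        refine integral_congr_ae (ae_of_all _ fun ω => ?_)
        show Y₁ ω * (h ω * p ω) = Y₁ ω
        rw [hhp ω, mul_one]

/-- Inverse-probability-weighting identification of the counterfactual mean:
under consistency, unconfoundedness and positivity, E[A·Y / g(X)] = E[Y₁]. -/
theorem ipw_identification
    {Ω : Type*} [MeasurableSpace Ω] [StandardBorelSpace Ω]
    (μ : Measure Ω) [IsProbabilityMeasure μ]
    {d : ℕ} (A Y Y₁ Y₀ : Ω → ℝ) (X : Ω → (Fin d → ℝ)) (g : (Fin d → ℝ) → ℝ) (c : ℝ)
    (hA : Measurable A) (hAval : ∀ ω, A ω = 0 ∨ A ω = 1)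
    (hY₁ : Measurable Y₁) (hY₀ : Measurable Y₀)
    (hY₁b : ∃ M, ∀ ω, |Y₁ ω| ≤ M) (hY₀b : ∃ M, ∀ ω, |Y₀ ω| ≤ M)
    (hYdef : ∀ ω, Y ω = A ω * Y₁ ω + (1 - A ω) * Y₀ ω)
    (hX : Measurable X) (hg : Measurable g)
    (hCI : CondIndep (MeasurableSpace.comap X inferInstance)
      (MeasurableSpace.comap Y₁ inferInstance)
      (MeasurableSpace.comap A inferInstance)
      hX.comap_le μ)
    (hc : 0 < c) (hc2 : c < 1/2) (hglb : ∀ x, c ≤ g x) (hgub : ∀ x, g x ≤ 1 - c)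
    (hgver : (fun ω => g (X ω)) =ᵐ[μ] μ[A | MeasurableSpace.comap X inferInstance]) :
    ∫ ω, A ω * Y ω / g (X ω) ∂μ = ∫ ω, Y₁ ω ∂μ := by
  obtain ⟨M, hM⟩ := hY₁b
  have hgpos : ∀ x, 0 < g x := fun x => lt_of_lt_of_le hc (hglb x)
  have hS : MeasurableSet[MeasurableSpace.comap A inferInstance] (A ⁻¹' {1}) :=
    ⟨{1}, measurableSet_singleton 1, rfl⟩
  have hAW : ∀ ω, A ω = Set.indicator (A ⁻¹' {1}) (fun _ => (1:ℝ)) ω := by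
    intro ω
    rcases hAval ω with h0 | h1
    · simp [Set.indicator_apply, Set.mem_preimage, h0]
    · simp [Set.indicator_apply, Set.mem_preimage, h1]
  have hpW : μ[Set.indicator (A ⁻¹' {1}) (fun _ => (1:ℝ))|MeasurableSpace.comap X inferInstance]
      =ᵐ[μ] (fun ω => g (X ω)) := by
    have hAeq : A = Set.indicator (A ⁻¹' {1}) (fun _ => (1:ℝ)) := funext hAW
    rw [← hAeq]
    exact hgver.symm
  have hXm : Measurable[MeasurableSpace.comap X inferInstance] X :=
    measurable_iff_comap_le.mpr le_rfl
  have hY₁m : Measurable[MeasurableSpace.comap Y₁ inferInstance] Y₁ :=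
    measurable_iff_comap_le.mpr le_rfl
  have key := ipw_aux μ hX.comap_le hY₁.comap_le hA.comap_le hCI
    Y₁ (fun ω => (g (X ω))⁻¹) (fun ω => g (X ω)) (A ⁻¹' {1})
    hY₁m.stronglyMeasurable M hM
    ((hg.comp hXm).inv).stronglyMeasurable (hg.comp hXm).stronglyMeasurable
    c⁻¹
    (fun ω => by
      rw [abs_of_pos (inv_pos.mpr (hgpos (X ω)))]
      exact inv_anti₀ hc (hglb (X ω)))
    (fun ω => by
      rw [abs_of_pos (hgpos (X ω))]
      exact le_trans (hgub (X ω)) (by linarith))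
    (fun ω => inv_mul_cancel₀ (ne_of_gt (hgpos (X ω))))
    hS hpW
  rw [← key]
  refine integral_congr_ae (ae_of_all _ fun ω => ?_)
  show A ω * Y ω / g (X ω)
    = Y₁ ω * ((g (X ω))⁻¹ * Set.indicator (A ⁻¹' {1}) (fun _ => (1:ℝ)) ω)
  rcases hAval ω with h0 | h1
  · have hW0 : Set.indicator (A ⁻¹' {1}) (fun _ => (1:ℝ)) ω = 0 := by rw [← hAW ω]; exact h0
    simp [h0, hW0]
  · have hW1 : Set.indicator (A ⁻¹' {1}) (fun _ => (1:ℝ)) ω = 1 := by rw [← hAW ω]; exact h1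
    rw [hYdef ω, h1, hW1, div_eq_mul_inv]
    ring
end

section
/- Let (Ω, 𝓕, μ) be a standard Borel probability space. Let A : Ω → ℝ take values in {0,1}, let Y₁, Y₀ be bounded real-valued random variables, set Y = A·Y₁ + (1 − A)·Y₀, let X : Ω → ℝ^d be measurable, and suppose Y₁ is conditionally independent of A given σ(X). Let g : ℝ^d → ℝ be measurable with c ≤ g(x) ≤ 1 − c for all x, for some 0 < c < 1/2, such that g ∘ X is a version of E[A | σ(X)], and let m₁ : ℝ^d → ℝ be a bounded measurable function such that (m₁ ∘ X)·(g ∘ X) is a version of E[A·Y | σ(X)]. Then E[m₁(X)] = E[Y₁]. (G-computation identification of the counterfactual mean, the population version of the functional in Equation (2).) -/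
open MeasureTheory ProbabilityTheory

section Aux

variable {Ω : Type*} {mΩ : MeasurableSpace Ω} {μ : Measure Ω} [IsProbabilityMeasure μ]

/-- Pull-out property integrated: for `f` bounded and `m`-strongly measurable,
`∫ f ⬝ E[Z|m] = ∫ f ⬝ Z`. -/
lemma integral_mul_condexp_aux {m : MeasurableSpace Ω} (hm : m ≤ mΩ) {f Z : Ω → ℝ}
    (hf : StronglyMeasurable[m] f) (C : ℝ) (hfb : ∀ ω, ‖f ω‖ ≤ C)
    (hZ : Integrable Z μ) :
    ∫ ω, f ω * (μ[Z|m]) ω ∂μ = ∫ ω, f ω * Z ω ∂μ := by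
  have h := condExp_stronglyMeasurable_mul_of_bound hm hf hZ C (ae_of_all _ hfb)
  have h1 : ∫ ω, f ω * (μ[Z|m]) ω ∂μ = ∫ ω, (μ[f * Z|m]) ω ∂μ :=
    (integral_congr_ae h).symm
  rw [h1, integral_condExp hm]
  rfl

end Aux

/-- G-computation identification of the counterfactual mean: if (m₁ ∘ X)·(g ∘ X) is a
version of E[A·Y | σ(X)], then E[m₁(X)] = E[Y₁]. -/
theorem gcomputation_identification
    {Ω : Type*} [MeasurableSpace Ω] [StandardBorelSpace Ω]
    (μ : Measure Ω) [IsProbabilityMeasure μ]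
    {d : ℕ} (A Y Y₁ Y₀ : Ω → ℝ) (X : Ω → (Fin d → ℝ))
    (g m₁ : (Fin d → ℝ) → ℝ) (c : ℝ)
    (hA : Measurable A) (hAval : ∀ ω, A ω = 0 ∨ A ω = 1)
    (hY₁ : Measurable Y₁) (hY₀ : Measurable Y₀)
    (hY₁b : ∃ M, ∀ ω, |Y₁ ω| ≤ M) (hY₀b : ∃ M, ∀ ω, |Y₀ ω| ≤ M)
    (hYdef : ∀ ω, Y ω = A ω * Y₁ ω + (1 - A ω) * Y₀ ω)
    (hX : Measurable X) (hg : Measurable g)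
    (hCI : CondIndep (MeasurableSpace.comap X inferInstance)
      (MeasurableSpace.comap Y₁ inferInstance)
      (MeasurableSpace.comap A inferInstance)
      hX.comap_le μ)
    (hc : 0 < c) (hc2 : c < 1/2) (hglb : ∀ x, c ≤ g x) (hgub : ∀ x, g x ≤ 1 - c)
    (hgver : (fun ω => g (X ω)) =ᵐ[μ] μ[A | MeasurableSpace.comap X inferInstance])
    (hm₁ : Measurable m₁) (hm₁b : ∃ M, ∀ x, |m₁ x| ≤ M)
    (hm₁ver : (fun ω => m₁ (X ω) * g (X ω))
      =ᵐ[μ] μ[fun ω => A ω * Y ω | MeasurableSpace.comap X inferInstance]) :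
    ∫ ω, m₁ (X ω) ∂μ = ∫ ω, Y₁ ω ∂μ := by
  classical
  have hGle := hX.comap_le
  have hmAle := hA.comap_le
  have hmYle := hY₁.comap_le
  obtain ⟨M, hM⟩ := hY₁b
  have hY₁int : Integrable Y₁ μ :=
    Integrable.mono' (integrable_const M) hY₁.aestronglyMeasurable
      (ae_of_all _ fun ω => by simpa using hM ω)
  have hAbd : ∀ ω, ‖A ω‖ ≤ 1 := fun ω => by rcases hAval ω with h | h <;> simp [h]
  have hgbd : ∀ x, ‖g x‖ ≤ 1 := fun x => by
    rw [Real.norm_eq_abs, abs_le]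
    constructor <;> nlinarith [hglb x, hgub x]
  have hXG : Measurable[(MeasurableSpace.comap X inferInstance)] X := measurable_iff_comap_le.mpr le_rfl
  have hgXsm : StronglyMeasurable[(MeasurableSpace.comap X inferInstance)] (fun ω => g (X ω)) := (hg.comp hXG).stronglyMeasurable
  -- A·Y = A·Y₁
  have hAY : (fun ω => A ω * Y ω) = fun ω => A ω * Y₁ ω := by
    funext ω; rcases hAval ω with h | h <;> simp [hYdef ω, h] <;> ring
  rw [hAY] at hm₁ver
  -- the treatment set
  set S : Set Ω := A ⁻¹' {1} with hS
  have hSmA : MeasurableSet[(MeasurableSpace.comap A inferInstance)] S := ⟨{1}, measurableSet_singleton 1, rfl⟩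
  have hSind : Set.indicator S (fun _ => (1:ℝ)) = A := by
    funext ω
    rcases hAval ω with h | h
    · have hω : ω ∉ S := by simp [hS, h]
      simp [Set.indicator_of_notMem hω, h]
    · have hω : ω ∈ S := by simp [hS, h]
      simp [Set.indicator_of_mem hω, h]
  -- key identity on rectangles
  have hKey : ∀ G : Set Ω, MeasurableSet[(MeasurableSpace.comap X inferInstance)] G → ∀ T : Set Ω, MeasurableSet[(MeasurableSpace.comap Y₁ inferInstance)] T →
      ∫ ω in T, Set.indicator G (fun _ => (1:ℝ)) ω * A ω ∂μ
        = ∫ ω in T, Set.indicator G (fun _ => (1:ℝ)) ω * g (X ω) ∂μ := by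
    intro G hG T hT
    have hGamb := hGle G hG
    have hTamb := hmYle T hT
    have hGsm : StronglyMeasurable[(MeasurableSpace.comap X inferInstance)] (Set.indicator G (fun _ => (1:ℝ))) :=
      stronglyMeasurable_const.indicator hG
    have hGbd : ∀ ω, ‖Set.indicator G (fun _ => (1:ℝ)) ω‖ ≤ 1 := fun ω => by
      by_cases h : ω ∈ G <;> simp [Set.indicator_apply, h]
    have hCI' := (condIndep_iff (MeasurableSpace.comap X inferInstance) (MeasurableSpace.comap Y₁ inferInstance) (MeasurableSpace.comap A inferInstance) hGle hmYle hmAle μ).mp hCI T S hT hSmA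
    have hScond : (μ⟦S|(MeasurableSpace.comap X inferInstance)⟧) = μ[A|(MeasurableSpace.comap X inferInstance)] := by rw [hSind]
    have hTSint : Integrable (Set.indicator (T ∩ S) (fun _ => (1:ℝ))) μ :=
      (integrable_const 1).indicator (hTamb.inter (hmAle S hSmA))
    have hTint : Integrable (Set.indicator T (fun _ => (1:ℝ))) μ :=
      (integrable_const 1).indicator hTamb
    calc ∫ ω in T, Set.indicator G (fun _ => (1:ℝ)) ω * A ω ∂μ
        = ∫ ω, Set.indicator G (fun _ => (1:ℝ)) ω
            * Set.indicator (T ∩ S) (fun _ => (1:ℝ)) ω ∂μ := by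
          rw [← integral_indicator hTamb]
          congr 1
          funext ω
          by_cases hωT : ω ∈ T <;> by_cases hωS : ω ∈ S <;>
            simp [Set.indicator_apply, hωT, hωS, ← hSind]
      _ = ∫ ω, Set.indicator G (fun _ => (1:ℝ)) ω
            * (μ[Set.indicator (T ∩ S) (fun _ => (1:ℝ))|(MeasurableSpace.comap X inferInstance)]) ω ∂μ :=
          (integral_mul_condexp_aux hGle hGsm 1 hGbd hTSint).symm
      _ = ∫ ω, (Set.indicator G (fun _ => (1:ℝ)) ω * g (X ω))
            * (μ[Set.indicator T (fun _ => (1:ℝ))|(MeasurableSpace.comap X inferInstance)]) ω ∂μ := by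
          refine integral_congr_ae ?_
          have hgver' : (fun ω => g (X ω)) =ᵐ[μ] μ[A|(MeasurableSpace.comap X inferInstance)] := hgver
          filter_upwards [hCI', hgver'] with ω h1 h2
          have h1' : (μ⟦T ∩ S|(MeasurableSpace.comap X inferInstance)⟧) ω = (μ⟦T|(MeasurableSpace.comap X inferInstance)⟧) ω * (μ⟦S|(MeasurableSpace.comap X inferInstance)⟧) ω := h1
          rw [hScond] at h1'
          rw [h1', ← h2]
          ring
      _ = ∫ ω, (Set.indicator G (fun _ => (1:ℝ)) ω * g (X ω))
            * Set.indicator T (fun _ => (1:ℝ)) ω ∂μ := by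
          refine integral_mul_condexp_aux hGle (hGsm.mul hgXsm) 1 (fun ω => ?_) hTint
          calc ‖Set.indicator G (fun _ => (1:ℝ)) ω * g (X ω)‖
              = ‖Set.indicator G (fun _ => (1:ℝ)) ω‖ * ‖g (X ω)‖ := norm_mul _ _
            _ ≤ 1 * 1 := mul_le_mul (hGbd ω) (hgbd (X ω)) (norm_nonneg _) zero_le_one
            _ = 1 := one_mul 1
      _ = ∫ ω in T, Set.indicator G (fun _ => (1:ℝ)) ω * g (X ω) ∂μ := by
          rw [← integral_indicator hTamb]
          congr 1
          funext ω
          by_cases hωT : ω ∈ T <;> simp [Set.indicator_apply, hωT]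
  -- extend from indicators to Y₁ via measures
  have hL : ∀ G : Set Ω, MeasurableSet[(MeasurableSpace.comap X inferInstance)] G →
      ∫ ω, Set.indicator G (fun _ => (1:ℝ)) ω * A ω * Y₁ ω ∂μ
        = ∫ ω, Set.indicator G (fun _ => (1:ℝ)) ω * g (X ω) * Y₁ ω ∂μ := by
    intro G hG
    have hGamb := hGle G hG
    set f₁ : Ω → ℝ := fun ω => Set.indicator G (fun _ => (1:ℝ)) ω * A ω with hf₁
    set f₂ : Ω → ℝ := fun ω => Set.indicator G (fun _ => (1:ℝ)) ω * g (X ω) with hf₂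
    have hf₁m : Measurable f₁ := (measurable_const.indicator hGamb).mul hA
    have hf₂m : Measurable f₂ := (measurable_const.indicator hGamb).mul (hg.comp hX)
    have hindnn : ∀ ω, 0 ≤ Set.indicator G (fun _ => (1:ℝ)) ω := fun ω => by
      by_cases h : ω ∈ G <;> simp [Set.indicator_apply, h]
    have hindbd : ∀ ω, Set.indicator G (fun _ => (1:ℝ)) ω ≤ 1 := fun ω => by
      by_cases h : ω ∈ G <;> simp [Set.indicator_apply, h]
    have hf₁nn : ∀ ω, 0 ≤ f₁ ω := fun ω => by
      rcases hAval ω with h | h <;> simp [hf₁, h, hindnn ω]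
    have hf₂nn : ∀ ω, 0 ≤ f₂ ω :=
      fun ω => mul_nonneg (hindnn ω) (le_trans hc.le (hglb (X ω)))
    have hf₁bd : ∀ ω, ‖f₁ ω‖ ≤ 1 := fun ω => by
      rw [Real.norm_eq_abs, abs_of_nonneg (hf₁nn ω)]
      rcases hAval ω with h | h <;> simp [hf₁, h, hindbd ω]
    have hf₂bd : ∀ ω, ‖f₂ ω‖ ≤ 1 := fun ω => by
      rw [Real.norm_eq_abs, abs_of_nonneg (hf₂nn ω)]
      simp only [hf₂]
      have h1 := hindbd ω
      have h2 := hindnn ω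
      have h3 := hglb (X ω)
      have h4 := hgub (X ω)
      nlinarith
    have hf₁int : Integrable f₁ μ :=
      Integrable.mono' (integrable_const 1) hf₁m.aestronglyMeasurable (ae_of_all _ hf₁bd)
    have hf₂int : Integrable f₂ μ :=
      Integrable.mono' (integrable_const 1) hf₂m.aestronglyMeasurable (ae_of_all _ hf₂bd)
    set ν₁ : Measure Ω := μ.withDensity (fun ω => ((f₁ ω).toNNReal : ENNReal)) with hν₁
    set ν₂ : Measure Ω := μ.withDensity (fun ω => ((f₂ ω).toNNReal : ENNReal)) with hν₂
    have hcoe₁ : ∀ ω, ((f₁ ω).toNNReal : ENNReal) = ENNReal.ofReal (f₁ ω) := fun ω => rfl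
    have hcoe₂ : ∀ ω, ((f₂ ω).toNNReal : ENNReal) = ENNReal.ofReal (f₂ ω) := fun ω => rfl
    have hνeq : ν₁.trim hmYle = ν₂.trim hmYle := by
      refine @Measure.ext Ω (MeasurableSpace.comap Y₁ inferInstance) _ _ fun T hT => ?_
      have hTamb := hmYle T hT
      rw [trim_measurableSet_eq hmYle hT, trim_measurableSet_eq hmYle hT, hν₁, hν₂,
        withDensity_apply _ hTamb, withDensity_apply _ hTamb]
      have e1 : ∫⁻ ω in T, ((f₁ ω).toNNReal : ENNReal) ∂μ
          = ENNReal.ofReal (∫ ω in T, f₁ ω ∂μ) := by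
        simp_rw [hcoe₁]
        exact (ofReal_integral_eq_lintegral_ofReal hf₁int.integrableOn
          (ae_of_all _ hf₁nn)).symm
      have e2 : ∫⁻ ω in T, ((f₂ ω).toNNReal : ENNReal) ∂μ
          = ENNReal.ofReal (∫ ω in T, f₂ ω ∂μ) := by
        simp_rw [hcoe₂]
        exact (ofReal_integral_eq_lintegral_ofReal hf₂int.integrableOn
          (ae_of_all _ hf₂nn)).symm
      rw [e1, e2, hKey G hG T hT]
    have hY₁smY : StronglyMeasurable[(MeasurableSpace.comap Y₁ inferInstance)] Y₁ :=
      (measurable_iff_comap_le.mpr le_rfl).stronglyMeasurable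
    have hnn₁m : Measurable fun ω => (f₁ ω).toNNReal := hf₁m.real_toNNReal
    have hnn₂m : Measurable fun ω => (f₂ ω).toNNReal := hf₂m.real_toNNReal
    have i₁ : ∫ ω, Y₁ ω ∂ν₁ = ∫ ω, f₁ ω * Y₁ ω ∂μ := by
      rw [hν₁, integral_withDensity_eq_integral_smul hnn₁m]
      refine integral_congr_ae (ae_of_all _ fun ω => ?_)
      simp [NNReal.smul_def, Real.coe_toNNReal _ (hf₁nn ω)]
    have i₂ : ∫ ω, Y₁ ω ∂ν₂ = ∫ ω, f₂ ω * Y₁ ω ∂μ := by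
      rw [hν₂, integral_withDensity_eq_integral_smul hnn₂m]
      refine integral_congr_ae (ae_of_all _ fun ω => ?_)
      simp [NNReal.smul_def, Real.coe_toNNReal _ (hf₂nn ω)]
    calc ∫ ω, Set.indicator G (fun _ => (1:ℝ)) ω * A ω * Y₁ ω ∂μ
        = ∫ ω, Y₁ ω ∂ν₁ := i₁.symm
      _ = ∫ ω, Y₁ ω ∂(ν₁.trim hmYle) := integral_trim hmYle hY₁smY
      _ = ∫ ω, Y₁ ω ∂(ν₂.trim hmYle) := by rw [hνeq]
      _ = ∫ ω, Y₁ ω ∂ν₂ := (integral_trim hmYle hY₁smY).symm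
      _ = ∫ ω, Set.indicator G (fun _ => (1:ℝ)) ω * g (X ω) * Y₁ ω ∂μ := i₂
  -- identify the conditional expectation
  have hcond : (fun ω => g (X ω) * (μ[Y₁|(MeasurableSpace.comap X inferInstance)]) ω) =ᵐ[μ] μ[fun ω => A ω * Y₁ ω|(MeasurableSpace.comap X inferInstance)] := by
    refine ae_eq_condExp_of_forall_setIntegral_eq hGle
      (hY₁int.bdd_mul hA.aestronglyMeasurable (ae_of_all _ hAbd))
      (fun s hs _ => (integrable_condExp.bdd_mul (hg.comp hX).aestronglyMeasurable
        (ae_of_all _ fun ω => hgbd (X ω))).integrableOn)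
      (fun s hs _ => ?_)
      ((hgXsm.mul stronglyMeasurable_condExp).aestronglyMeasurable)
    have hsamb := hGle s hs
    have hssm : StronglyMeasurable[(MeasurableSpace.comap X inferInstance)] (fun ω => Set.indicator s (fun _ => (1:ℝ)) ω * g (X ω)) :=
      (stronglyMeasurable_const.indicator hs).mul hgXsm
    have hsbd : ∀ ω, ‖Set.indicator s (fun _ => (1:ℝ)) ω * g (X ω)‖ ≤ 1 := fun ω => by
      rw [norm_mul]
      calc ‖Set.indicator s (fun _ => (1:ℝ)) ω‖ * ‖g (X ω)‖ ≤ 1 * 1 := by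
            refine mul_le_mul ?_ (hgbd (X ω)) (norm_nonneg _) zero_le_one
            by_cases h : ω ∈ s <;> simp [Set.indicator_apply, h]
        _ = 1 := one_mul 1
    calc ∫ ω in s, g (X ω) * (μ[Y₁|(MeasurableSpace.comap X inferInstance)]) ω ∂μ
        = ∫ ω, (Set.indicator s (fun _ => (1:ℝ)) ω * g (X ω)) * (μ[Y₁|(MeasurableSpace.comap X inferInstance)]) ω ∂μ := by
          rw [← integral_indicator hsamb]
          congr 1
          funext ω
          by_cases hω : ω ∈ s <;> simp [Set.indicator_apply, hω]
      _ = ∫ ω, (Set.indicator s (fun _ => (1:ℝ)) ω * g (X ω)) * Y₁ ω ∂μ :=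
          integral_mul_condexp_aux hGle hssm 1 hsbd hY₁int
      _ = ∫ ω, Set.indicator s (fun _ => (1:ℝ)) ω * A ω * Y₁ ω ∂μ := (hL s hs).symm
      _ = ∫ ω in s, A ω * Y₁ ω ∂μ := by
          rw [← integral_indicator hsamb]
          congr 1
          funext ω
          by_cases hω : ω ∈ s <;> simp [Set.indicator_apply, hω, mul_assoc]
  -- conclude
  have hfinal : (fun ω => m₁ (X ω)) =ᵐ[μ] μ[Y₁|(MeasurableSpace.comap X inferInstance)] := by
    filter_upwards [hm₁ver, hcond] with ω h1 h2
    have hgne : g (X ω) ≠ 0 := ne_of_gt (lt_of_lt_of_le hc (hglb _))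
    refine mul_right_cancel₀ hgne ?_
    rw [h1, ← h2]
    ring
  rw [integral_congr_ae hfinal, integral_condExp hGle]
end

section
/- Let (Ω, 𝓕, μ) be a standard Borel probability space. Let A : Ω → ℝ take values in {0,1}, let Y₁, Y₀ be bounded real-valued random variables, set Y = A·Y₁ + (1 − A)·Y₀, let X : Ω → ℝ^d be measurable, and suppose Y₁ is conditionally independent of A given σ(X). Let g : ℝ^d → ℝ be measurable with c ≤ g(x) ≤ 1 − c for all x, for some 0 < c < 1/2, such that g ∘ X is a version of E[A | σ(X)]. Then for every bounded measurable function m̂ : ℝ^d → ℝ (a possibly misspecified outcome model), E[(A/g(X))·(Y − m̂(X)) + m̂(X)] = E[Y₁]. (Double robustness of the AIPW functional when the propensity score is correct.) -/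
open MeasureTheory ProbabilityTheory
open scoped ENNReal NNReal

lemma aipw_intg {Ω : Type*} [MeasurableSpace Ω] {μ : Measure Ω} [IsProbabilityMeasure μ]
    {f : Ω → ℝ} (hf : Measurable f) {M : ℝ} (hM : ∀ ω, |f ω| ≤ M) : Integrable f μ :=
  ⟨hf.aestronglyMeasurable, HasFiniteIntegral.of_bounded
    (ae_of_all _ fun ω => by rw [Real.norm_eq_abs]; exact hM ω)⟩

lemma aipw_pullout {Ω : Type*} [MeasurableSpace Ω] (μ : Measure Ω) [IsProbabilityMeasure μ]
    {d : ℕ} {X : Ω → (Fin d → ℝ)} (hX : Measurable X)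
    {ψ : (Fin d → ℝ) → ℝ} (hψ : Measurable ψ) {C : ℝ} (hC : ∀ x, |ψ x| ≤ C)
    {f : Ω → ℝ} (hf : Integrable f μ) :
    ∫ ω, ψ (X ω) * f ω ∂μ
      = ∫ ω, ψ (X ω) * (μ[f | MeasurableSpace.comap X inferInstance]) ω ∂μ := by
  set mX := MeasurableSpace.comap X inferInstance with hmXdef
  have hmX : mX ≤ _ := hX.comap_le
  have hsm : StronglyMeasurable[mX] (fun ω => ψ (X ω)) :=
    (hψ.comp (Measurable.of_comap_le le_rfl)).stronglyMeasurable
  have h := condExp_stronglyMeasurable_mul_of_bound hmX hsm hf C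
    (ae_of_all _ fun ω => by rw [Real.norm_eq_abs]; exact hC (X ω))
  calc ∫ ω, ψ (X ω) * f ω ∂μ
      = ∫ ω, (μ[(fun ω => ψ (X ω)) * f | MeasurableSpace.comap X inferInstance]) ω ∂μ := (integral_condExp hmX).symm
    _ = ∫ ω, ψ (X ω) * (μ[f | MeasurableSpace.comap X inferInstance]) ω ∂μ := integral_congr_ae h

/-- Double robustness of the AIPW functional when the propensity score is correct:
for every bounded measurable (possibly misspecified) outcome model mhat,
E[(A/g(X))·(Y − mhat(X)) + mhat(X)] = E[Y₁]. -/
theorem aipw_double_robust_propensity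
    {Ω : Type*} [MeasurableSpace Ω] [StandardBorelSpace Ω]
    (μ : Measure Ω) [IsProbabilityMeasure μ]
    {d : ℕ} (A Y Y₁ Y₀ : Ω → ℝ) (X : Ω → (Fin d → ℝ)) (g : (Fin d → ℝ) → ℝ) (c : ℝ)
    (hA : Measurable A) (hAval : ∀ ω, A ω = 0 ∨ A ω = 1)
    (hY₁ : Measurable Y₁) (hY₀ : Measurable Y₀)
    (hY₁b : ∃ M, ∀ ω, |Y₁ ω| ≤ M) (hY₀b : ∃ M, ∀ ω, |Y₀ ω| ≤ M)
    (hYdef : ∀ ω, Y ω = A ω * Y₁ ω + (1 - A ω) * Y₀ ω)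
    (hX : Measurable X) (hg : Measurable g)
    (hCI : CondIndep (MeasurableSpace.comap X inferInstance)
      (MeasurableSpace.comap Y₁ inferInstance)
      (MeasurableSpace.comap A inferInstance)
      hX.comap_le μ)
    (hc : 0 < c) (hc2 : c < 1/2) (hglb : ∀ x, c ≤ g x) (hgub : ∀ x, g x ≤ 1 - c)
    (hgver : (fun ω => g (X ω)) =ᵐ[μ] μ[A | MeasurableSpace.comap X inferInstance]) :
    ∀ (mhat : (Fin d → ℝ) → ℝ), Measurable mhat → (∃ M, ∀ x, |mhat x| ≤ M) →
      ∫ ω, (A ω / g (X ω)) * (Y ω - mhat (X ω)) + mhat (X ω) ∂μ = ∫ ω, Y₁ ω ∂μ := by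
  intro mhat hmhat hmhatb
  obtain ⟨M1, hM1⟩ := hY₁b
  obtain ⟨Mm, hMm⟩ := hmhatb
  have hM1' : ∀ ω, |Y₁ ω| ≤ |M1| := fun ω => (hM1 ω).trans (le_abs_self M1)
  have hMm' : ∀ x, |mhat x| ≤ |Mm| := fun x => (hMm x).trans (le_abs_self Mm)
  have hmX := hX.comap_le
  have hgpos : ∀ x, 0 < g x := fun x => lt_of_lt_of_le hc (hglb x)
  have hgne : ∀ x, g x ≠ 0 := fun x => (hgpos x).ne'
  have hkb : ∀ x, |(g x)⁻¹| ≤ c⁻¹ := by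
    intro x
    rw [abs_of_pos (inv_pos.mpr (hgpos x))]
    exact inv_anti₀ hc (hglb x)
  have hkm : Measurable fun x => (g x)⁻¹ := hg.inv
  have hAb : ∀ ω, |A ω| ≤ 1 := by
    intro ω; rcases hAval ω with h | h <;> simp [h]
  have hAY : ∀ ω, A ω * Y ω = A ω * Y₁ ω := by
    intro ω; rcases hAval ω with h | h <;> simp [hYdef, h]
  -- integrability
  have i1 : Integrable (fun ω => A ω * Y₁ ω * (g (X ω))⁻¹) μ := by
    refine aipw_intg ((hA.mul hY₁).mul (hkm.comp hX)) (M := 1 * |M1| * c⁻¹) fun ω => ?_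
    rw [abs_mul, abs_mul]
    exact mul_le_mul (mul_le_mul (hAb ω) (hM1' ω) (abs_nonneg _) zero_le_one)
      (hkb (X ω)) (abs_nonneg _) (by positivity)
  have i2 : Integrable (fun ω => A ω * mhat (X ω) * (g (X ω))⁻¹) μ := by
    refine aipw_intg ((hA.mul (hmhat.comp hX)).mul (hkm.comp hX)) (M := 1 * |Mm| * c⁻¹)
      fun ω => ?_
    rw [abs_mul, abs_mul]
    exact mul_le_mul (mul_le_mul (hAb ω) (hMm' (X ω)) (abs_nonneg _) zero_le_one)
      (hkb (X ω)) (abs_nonneg _) (by positivity)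
  have i3 : Integrable (fun ω => mhat (X ω)) μ := aipw_intg (hmhat.comp hX) fun ω => hMm' (X ω)
  have iA : Integrable A μ := aipw_intg hA hAb
  -- rewrite the integrand
  have h1 : ∀ ω, A ω / g (X ω) * (Y ω - mhat (X ω)) + mhat (X ω)
      = A ω * Y₁ ω * (g (X ω))⁻¹ - A ω * mhat (X ω) * (g (X ω))⁻¹ + mhat (X ω) := by
    intro ω
    rw [div_eq_mul_inv]
    linear_combination (g (X ω))⁻¹ * hAY ω
  simp only [h1]
  -- second term: ∫ A·mhat(X)·g(X)⁻¹ = ∫ mhat(X)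
  have hF2 : ∫ ω, A ω * mhat (X ω) * (g (X ω))⁻¹ ∂μ = ∫ ω, mhat (X ω) ∂μ := by
    have hψm : Measurable fun x => mhat x * (g x)⁻¹ := hmhat.mul hkm
    have hψb : ∀ x, |mhat x * (g x)⁻¹| ≤ |Mm| * c⁻¹ := fun x => by
      rw [abs_mul]
      exact mul_le_mul (hMm' x) (hkb x) (abs_nonneg _) (abs_nonneg _)
    calc ∫ ω, A ω * mhat (X ω) * (g (X ω))⁻¹ ∂μ
        = ∫ ω, (mhat (X ω) * (g (X ω))⁻¹) * A ω ∂μ :=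
          integral_congr_ae (ae_of_all _ fun ω => by ring)
      _ = ∫ ω, (mhat (X ω) * (g (X ω))⁻¹) * (μ[A | MeasurableSpace.comap X inferInstance]) ω ∂μ :=
          aipw_pullout μ hX hψm hψb iA
      _ = ∫ ω, (mhat (X ω) * (g (X ω))⁻¹) * g (X ω) ∂μ :=
          integral_congr_ae (by filter_upwards [hgver] with ω h; rw [← h])
      _ = ∫ ω, mhat (X ω) ∂μ := integral_congr_ae (ae_of_all _ fun ω => by
          show mhat (X ω) * (g (X ω))⁻¹ * g (X ω) = mhat (X ω)
          rw [mul_assoc, inv_mul_cancel₀ (hgne (X ω)), mul_one])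
  -- key set-level identity from conditional independence
  have hsA : MeasurableSet (A ⁻¹' {1}) := hA (measurableSet_singleton 1)
  have hAind : ∀ ω, A ω = Set.indicator (A ⁻¹' {1}) (fun _ => (1 : ℝ)) ω := by
    intro ω
    rcases hAval ω with h | h <;>
      simp [Set.indicator_apply, Set.mem_preimage, h]
  have hLset : ∀ B : Set ℝ, MeasurableSet B →
      ∫ ω in Y₁ ⁻¹' B, A ω * (g (X ω))⁻¹ ∂μ = (μ (Y₁ ⁻¹' B)).toReal := by
    intro B hB
    have ht : MeasurableSet (Y₁ ⁻¹' B) := hY₁ hB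
    have hCI' := (condIndep_iff (MeasurableSpace.comap X inferInstance) (MeasurableSpace.comap Y₁ inferInstance)
        (MeasurableSpace.comap A inferInstance) hX.comap_le hY₁.comap_le hA.comap_le μ).mp
        hCI (Y₁ ⁻¹' B) (A ⁻¹' {1}) ⟨B, hB, rfl⟩ ⟨{1}, measurableSet_singleton 1, rfl⟩
    have hind_meas : Measurable (Set.indicator ((Y₁ ⁻¹' B) ∩ (A ⁻¹' {1})) (fun _ => (1 : ℝ))) :=
      measurable_const.indicator (ht.inter hsA)
    have hind_b : ∀ ω, |Set.indicator ((Y₁ ⁻¹' B) ∩ (A ⁻¹' {1})) (fun _ => (1 : ℝ)) ω| ≤ 1 := by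
      intro ω
      by_cases h : ω ∈ (Y₁ ⁻¹' B) ∩ (A ⁻¹' {1}) <;> simp [Set.indicator_apply, h]
    have iind : Integrable (Set.indicator ((Y₁ ⁻¹' B) ∩ (A ⁻¹' {1})) (fun _ => (1 : ℝ))) μ :=
      aipw_intg hind_meas hind_b
    have hAcond : (μ⟦A ⁻¹' {1} | MeasurableSpace.comap X inferInstance⟧) =ᵐ[μ] fun ω => g (X ω) := by
      have : (Set.indicator (A ⁻¹' {1}) (fun _ => (1 : ℝ))) = A := by
        funext ω; exact (hAind ω).symm
      rw [this]
      exact hgver.symm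
    calc ∫ ω in Y₁ ⁻¹' B, A ω * (g (X ω))⁻¹ ∂μ
        = ∫ ω, Set.indicator (Y₁ ⁻¹' B) (fun ω => A ω * (g (X ω))⁻¹) ω ∂μ :=
          (integral_indicator ht).symm
      _ = ∫ ω, (g (X ω))⁻¹ * Set.indicator ((Y₁ ⁻¹' B) ∩ (A ⁻¹' {1})) (fun _ => (1 : ℝ)) ω ∂μ := by
          refine integral_congr_ae (ae_of_all _ fun ω => ?_)
          by_cases h1 : ω ∈ Y₁ ⁻¹' B <;> by_cases h2 : ω ∈ A ⁻¹' {1} <;>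
            simp [Set.indicator_apply, h1, h2, hAind ω]
      _ = ∫ ω, (g (X ω))⁻¹
            * (μ[Set.indicator ((Y₁ ⁻¹' B) ∩ (A ⁻¹' {1})) (fun _ => (1 : ℝ)) | MeasurableSpace.comap X inferInstance]) ω ∂μ :=
          aipw_pullout μ hX hkm hkb iind
      _ = ∫ ω, (g (X ω))⁻¹ * ((μ⟦Y₁ ⁻¹' B | MeasurableSpace.comap X inferInstance⟧) ω * g (X ω)) ∂μ := by
          refine integral_congr_ae ?_
          filter_upwards [hCI', hAcond] with ω h h'
          rw [h, Pi.mul_apply, h']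
      _ = ∫ ω, (μ⟦Y₁ ⁻¹' B | MeasurableSpace.comap X inferInstance⟧) ω ∂μ :=
          integral_congr_ae (ae_of_all _ fun ω => by
            show (g (X ω))⁻¹ * ((μ⟦Y₁ ⁻¹' B | MeasurableSpace.comap X inferInstance⟧) ω * g (X ω))
              = (μ⟦Y₁ ⁻¹' B | MeasurableSpace.comap X inferInstance⟧) ω
            rw [mul_comm ((μ⟦Y₁ ⁻¹' B | MeasurableSpace.comap X inferInstance⟧) ω), ← mul_assoc,
              inv_mul_cancel₀ (hgne (X ω)), one_mul])
      _ = ∫ ω, Set.indicator (Y₁ ⁻¹' B) (fun _ => (1 : ℝ)) ω ∂μ := integral_condExp hmX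
      _ = (μ (Y₁ ⁻¹' B)).toReal := by
          rw [integral_indicator_const (1 : ℝ) ht, smul_eq_mul, mul_one]; rfl
  -- measure equality and conclusion for the first term
  have hwnn : ∀ ω, 0 ≤ A ω * (g (X ω))⁻¹ := by
    intro ω
    apply mul_nonneg
    · rcases hAval ω with h | h <;> rw [h] <;> norm_num
    · exact inv_nonneg.mpr (hgpos (X ω)).le
  have hwm : Measurable fun ω => (A ω * (g (X ω))⁻¹).toNNReal :=
    (hA.mul (hkm.comp hX)).real_toNNReal
  set ρ := μ.withDensity (fun ω => ((A ω * (g (X ω))⁻¹).toNNReal : ℝ≥0∞)) with hρ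
  have hmapeq : Measure.map Y₁ ρ = Measure.map Y₁ μ := by
    ext B hB
    have ht : MeasurableSet (Y₁ ⁻¹' B) := hY₁ hB
    rw [Measure.map_apply hY₁ hB, Measure.map_apply hY₁ hB, hρ, withDensity_apply _ ht]
    have hcoe : ∀ ω, ((A ω * (g (X ω))⁻¹).toNNReal : ℝ≥0∞)
        = ENNReal.ofReal (A ω * (g (X ω))⁻¹) := fun ω => rfl
    simp_rw [hcoe]
    have iAk : Integrable (fun ω => A ω * (g (X ω))⁻¹) (μ.restrict (Y₁ ⁻¹' B)) := by
      refine Integrable.restrict (aipw_intg (hA.mul (hkm.comp hX)) (M := 1 * c⁻¹) fun ω => ?_)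
      show |A ω * (g (X ω))⁻¹| ≤ 1 * c⁻¹
      rw [abs_mul]
      exact mul_le_mul (hAb ω) (hkb (X ω)) (abs_nonneg _) zero_le_one
    rw [← ofReal_integral_eq_lintegral_ofReal iAk (ae_of_all _ hwnn), hLset B hB,
      ENNReal.ofReal_toReal (measure_ne_top μ _)]
  have hF3 : ∫ ω, A ω * Y₁ ω * (g (X ω))⁻¹ ∂μ = ∫ ω, Y₁ ω ∂μ := by
    have hstep : ∫ ω, A ω * Y₁ ω * (g (X ω))⁻¹ ∂μ
        = ∫ ω, (A ω * (g (X ω))⁻¹).toNNReal • Y₁ ω ∂μ := by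
      refine integral_congr_ae (ae_of_all _ fun ω => ?_)
      show A ω * Y₁ ω * (g (X ω))⁻¹ = (A ω * (g (X ω))⁻¹).toNNReal • Y₁ ω
      rw [NNReal.smul_def, Real.coe_toNNReal _ (hwnn ω), smul_eq_mul]
      ring
    rw [hstep, ← integral_withDensity_eq_integral_smul hwm Y₁, ← hρ]
    calc ∫ ω, Y₁ ω ∂ρ
        = ∫ y, y ∂(Measure.map Y₁ ρ) :=
          (integral_map hY₁.aemeasurable aestronglyMeasurable_id).symm
      _ = ∫ y, y ∂(Measure.map Y₁ μ) := by rw [hmapeq]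
      _ = ∫ ω, Y₁ ω ∂μ := integral_map hY₁.aemeasurable aestronglyMeasurable_id
  have hadd : (∫ ω, (A ω * Y₁ ω * (g (X ω))⁻¹ - A ω * mhat (X ω) * (g (X ω))⁻¹)
        + mhat (X ω) ∂μ)
      = (∫ ω, (A ω * Y₁ ω * (g (X ω))⁻¹ - A ω * mhat (X ω) * (g (X ω))⁻¹) ∂μ)
        + ∫ ω, mhat (X ω) ∂μ := integral_add (i1.sub i2) i3
  have hsub : (∫ ω, (A ω * Y₁ ω * (g (X ω))⁻¹ - A ω * mhat (X ω) * (g (X ω))⁻¹) ∂μ)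
      = (∫ ω, A ω * Y₁ ω * (g (X ω))⁻¹ ∂μ)
        - ∫ ω, A ω * mhat (X ω) * (g (X ω))⁻¹ ∂μ := integral_sub i1 i2
  rw [hadd, hsub, hF2, hF3]
  ring
end

section
/- Let (Ω, 𝓕, μ) be a standard Borel probability space. Let A : Ω → ℝ take values in {0,1}, let Y₁, Y₀ be bounded real-valued random variables, set Y = A·Y₁ + (1 − A)·Y₀, let X : Ω → ℝ^d be measurable, and suppose Y₁ is conditionally independent of A given σ(X). Let g : ℝ^d → ℝ be measurable with c ≤ g(x) ≤ 1 − c for all x, for some 0 < c < 1/2, such that g ∘ X is a version of E[A | σ(X)], and let m₁ : ℝ^d → ℝ be a bounded measurable function such that (m₁ ∘ X)·(g ∘ X) is a version of E[A·Y | σ(X)] (a correctly specified outcome model). Then for every measurable ĝ : ℝ^d → ℝ with c ≤ ĝ(x) ≤ 1 for all x (a possibly misspecified propensity model), E[(A/ĝ(X))·(Y − m₁(X)) + m₁(X)] = E[Y₁]. (Double robustness of the AIPW functional when the outcome model is correct.) -/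
open MeasureTheory ProbabilityTheory

section Aux
variable {Ω' : Type*}

lemma aux_integrable_of_bounded {mΩ : MeasurableSpace Ω'} {μ : Measure Ω'} [IsFiniteMeasure μ]
    {f : Ω' → ℝ} (hf : AEStronglyMeasurable f μ) {M : ℝ} (hM : ∀ ω, |f ω| ≤ M) :
    Integrable f μ :=
  ⟨hf, HasFiniteIntegral.of_bounded (C := M) (Filter.Eventually.of_forall fun ω => by
    simpa [Real.norm_eq_abs] using hM ω)⟩

lemma aux_integral_mul_condexp {mΩ : MeasurableSpace Ω'} {μ : Measure Ω'} [IsFiniteMeasure μ]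
    {m : MeasurableSpace Ω'} (hm : m ≤ mΩ) {ψ f : Ω' → ℝ}
    (hψ : StronglyMeasurable[m] ψ) {C : ℝ} (hψb : ∀ ω, |ψ ω| ≤ C)
    (hf : Integrable f μ) :
    ∫ ω, ψ ω * (μ[f|m]) ω ∂μ = ∫ ω, ψ ω * f ω ∂μ := by
  have hint : Integrable (ψ * f) μ :=
    hf.bdd_mul (hψ.mono hm).aestronglyMeasurable
      (Filter.Eventually.of_forall fun ω => by simpa [Real.norm_eq_abs] using hψb ω)
  have h : μ[ψ * f|m] =ᵐ[μ] ψ * μ[f|m] := condExp_mul_of_stronglyMeasurable_left hψ hint hf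
  calc ∫ ω, ψ ω * (μ[f|m]) ω ∂μ = ∫ ω, (μ[ψ * f|m]) ω ∂μ := (integral_congr_ae h).symm
    _ = ∫ ω, (ψ * f) ω ∂μ := integral_condExp hm
    _ = ∫ ω, ψ ω * f ω ∂μ := rfl

end Aux

theorem aipw_aux
    {Ω : Type*} {mΩ : MeasurableSpace Ω} [StandardBorelSpace Ω]
    (μ : Measure Ω) [IsProbabilityMeasure μ]
    {d : ℕ} (A Y Y₁ Y₀ : Ω → ℝ) (X : Ω → (Fin d → ℝ))
    (g m₁ : (Fin d → ℝ) → ℝ) (c : ℝ)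
    (hA : Measurable A) (hAval : ∀ ω, A ω = 0 ∨ A ω = 1)
    (hY₁ : Measurable Y₁) (hY₀ : Measurable Y₀)
    (hY₁b : ∃ M, ∀ ω, |Y₁ ω| ≤ M) (hY₀b : ∃ M, ∀ ω, |Y₀ ω| ≤ M)
    (hYdef : ∀ ω, Y ω = A ω * Y₁ ω + (1 - A ω) * Y₀ ω)
    (hX : Measurable X) (hg : Measurable g)
    (hCI : CondIndep (MeasurableSpace.comap X inferInstance)
      (MeasurableSpace.comap Y₁ inferInstance)
      (MeasurableSpace.comap A inferInstance)
      hX.comap_le μ)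
    (hc : 0 < c) (hc2 : c < 1/2) (hglb : ∀ x, c ≤ g x) (hgub : ∀ x, g x ≤ 1 - c)
    (hgver : (fun ω => g (X ω)) =ᵐ[μ] μ[A | MeasurableSpace.comap X inferInstance])
    (hm₁ : Measurable m₁) (hm₁b : ∃ M, ∀ x, |m₁ x| ≤ M)
    (hm₁ver : (fun ω => m₁ (X ω) * g (X ω))
      =ᵐ[μ] μ[fun ω => A ω * Y ω | MeasurableSpace.comap X inferInstance]) :
    ∀ (ghat : (Fin d → ℝ) → ℝ), Measurable ghat → (∀ x, c ≤ ghat x) → (∀ x, ghat x ≤ 1) →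
      ∫ ω, (A ω / ghat (X ω)) * (Y ω - m₁ (X ω)) + m₁ (X ω) ∂μ = ∫ ω, Y₁ ω ∂μ := by
  intro ghat hghat hghlb hghub
  obtain ⟨M₁', hM₁'⟩ := hY₁b
  obtain ⟨M₀', hM₀'⟩ := hY₀b
  obtain ⟨Mm', hMm'⟩ := hm₁b
  have hM₁ : ∀ ω, |Y₁ ω| ≤ |M₁'| := fun ω => (hM₁' ω).trans (le_abs_self M₁')
  have hM₀ : ∀ ω, |Y₀ ω| ≤ |M₀'| := fun ω => (hM₀' ω).trans (le_abs_self M₀')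
  have hMm : ∀ x, |m₁ x| ≤ |Mm'| := fun x => (hMm' x).trans (le_abs_self Mm')
  set 𝓖 := MeasurableSpace.comap X inferInstance with h𝓖def
  set mY := MeasurableSpace.comap Y₁ inferInstance with hmYdef
  have h𝓖 : 𝓖 ≤ mΩ := hX.comap_le
  have hmY : mY ≤ mΩ := hY₁.comap_le
  set m2 := 𝓖 ⊔ mY with hm2def
  letI : MeasurableSpace Ω := mΩ
  have h𝓖m2 : 𝓖 ≤ m2 := by rw [hm2def]; exact le_sup_left
  have hmYm2 : mY ≤ m2 := by rw [hm2def]; exact le_sup_right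
  have hm2 : m2 ≤ mΩ := by rw [hm2def]; exact sup_le h𝓖 hmY
  -- measurability helpers
  have hXm : Measurable[𝓖] X := Measurable.of_comap_le le_rfl
  have hY₁mY : Measurable[mY] Y₁ := Measurable.of_comap_le le_rfl
  have hgXm : Measurable[𝓖] fun ω => g (X ω) := hg.comp hXm
  have hm₁Xm : Measurable[𝓖] fun ω => m₁ (X ω) := hm₁.comp hXm
  have hY₁m2 : Measurable[m2] Y₁ := hY₁mY.mono hmYm2 le_rfl
  -- Y facts
  have hYm : Measurable[mΩ] Y := by
    have hYeq : Y = fun ω => A ω * Y₁ ω + (1 - A ω) * Y₀ ω := funext hYdef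
    rw [hYeq]; exact (hA.mul hY₁).add ((measurable_const.sub hA).mul hY₀)
  have hAb : ∀ ω, |A ω| ≤ 1 := fun ω => by rcases hAval ω with h | h <;> simp [h]
  have hYb : ∀ ω, |Y ω| ≤ |M₁'| + |M₀'| := by
    intro ω; rcases hAval ω with h | h
    · have e : Y ω = Y₀ ω := by rw [hYdef ω, h]; ring
      rw [e]; exact (hM₀ ω).trans (le_add_of_nonneg_left (abs_nonneg _))
    · have e : Y ω = Y₁ ω := by rw [hYdef ω, h]; ring
      rw [e]; exact (hM₁ ω).trans (le_add_of_nonneg_right (abs_nonneg _))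
  have hgXb : ∀ ω, |g (X ω)| ≤ 1 := fun ω => abs_le.mpr
    ⟨by linarith [hglb (X ω)], by linarith [hgub (X ω)]⟩
  -- integrability
  have hAint : Integrable A μ := aux_integrable_of_bounded hA.aestronglyMeasurable hAb
  have hY₁int : Integrable Y₁ μ := aux_integrable_of_bounded hY₁.aestronglyMeasurable hM₁
  have hgXint : Integrable (fun ω => g (X ω)) μ :=
    aux_integrable_of_bounded (hg.comp hX).aestronglyMeasurable hgXb
  have hm₁Xint : Integrable (fun ω => m₁ (X ω)) μ :=
    aux_integrable_of_bounded (hm₁.comp hX).aestronglyMeasurable (fun ω => hMm (X ω))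
  have hAY₁int : Integrable (fun ω => A ω * Y₁ ω) μ := by
    refine aux_integrable_of_bounded (hA.mul hY₁).aestronglyMeasurable (M := |M₁'|) fun ω => ?_
    rw [abs_mul]
    calc |A ω| * |Y₁ ω| ≤ 1 * |M₁'| :=
          mul_le_mul (hAb ω) (hM₁ ω) (abs_nonneg _) zero_le_one
      _ = |M₁'| := one_mul _
  have hAYint : Integrable (fun ω => A ω * Y ω) μ := by
    refine aux_integrable_of_bounded (hA.mul hYm).aestronglyMeasurable
      (M := |M₁'| + |M₀'|) fun ω => ?_
    rw [abs_mul]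
    calc |A ω| * |Y ω| ≤ 1 * (|M₁'| + |M₀'|) :=
          mul_le_mul (hAb ω) (hYb ω) (abs_nonneg _) zero_le_one
      _ = _ := one_mul _
  have hAm₁Xint : Integrable (fun ω => A ω * m₁ (X ω)) μ := by
    refine aux_integrable_of_bounded (hA.mul (hm₁.comp hX)).aestronglyMeasurable
      (M := |Mm'|) fun ω => ?_
    rw [abs_mul]
    calc |A ω| * |m₁ (X ω)| ≤ 1 * |Mm'| :=
          mul_le_mul (hAb ω) (hMm (X ω)) (abs_nonneg _) zero_le_one
      _ = |Mm'| := one_mul _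
  -- A as an indicator
  set t := A ⁻¹' {1} with htdef
  have htA : MeasurableSet[MeasurableSpace.comap A inferInstance] t :=
    ⟨{1}, measurableSet_singleton 1, rfl⟩
  have htΩ : MeasurableSet[mΩ] t := hA (measurableSet_singleton 1)
  have hAeq : A = t.indicator fun _ => (1:ℝ) := by
    funext ω
    rcases hAval ω with h | h
    · have hω : ω ∉ t := by simp [htdef, Set.mem_preimage, h]
      rw [Set.indicator_of_notMem hω, h]
    · have hω : ω ∈ t := by simp [htdef, Set.mem_preimage, h]
      rw [Set.indicator_of_mem hω, h]
  -- conditional independence, set form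
  have hCI' := (condIndep_iff 𝓖 mY (MeasurableSpace.comap A inferInstance)
    h𝓖 hmY hA.comap_le μ).mp hCI
  -- total integral identity
  have htot : ∫ ω, g (X ω) ∂μ = ∫ ω, A ω ∂μ := by
    rw [integral_congr_ae hgver]; exact integral_condExp h𝓖
  -- KEY STEP 1: ∫_u g(X) = ∫_u A  for every u measurable w.r.t. m2 = σ(X) ⊔ σ(Y₁)
  have key : ∀ u, MeasurableSet[m2] u → ∫ ω in u, g (X ω) ∂μ = ∫ ω in u, A ω ∂μ := by
    have hgen : m2 = MeasurableSpace.generateFrom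
        {u | ∃ G S, MeasurableSet[𝓖] G ∧ MeasurableSet[mY] S ∧ u = G ∩ S} := by
      apply le_antisymm
      · rw [hm2def]
        refine sup_le ?_ ?_
        · intro s hs
          exact MeasurableSpace.measurableSet_generateFrom
            ⟨s, Set.univ, hs, MeasurableSet.univ, (Set.inter_univ s).symm⟩
        · intro s hs
          exact MeasurableSpace.measurableSet_generateFrom
            ⟨Set.univ, s, MeasurableSet.univ, hs, (Set.univ_inter s).symm⟩
      · refine MeasurableSpace.generateFrom_le ?_
        rintro u ⟨G, S, hG, hS, rfl⟩
        exact (h𝓖m2 _ hG).inter (hmYm2 _ hS)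
    have hpi : IsPiSystem {u | ∃ G S, MeasurableSet[𝓖] G ∧ MeasurableSet[mY] S ∧ u = G ∩ S} := by
      rintro u ⟨G, S, hG, hS, rfl⟩ v ⟨G', S', hG', hS', rfl⟩ _
      exact ⟨G ∩ G', S ∩ S', hG.inter hG', hS.inter hS',
        Set.inter_inter_inter_comm G S G' S'⟩
    have main := MeasurableSpace.induction_on_inter (m := m2)
      (C := fun u _ => ∫ ω in u, g (X ω) ∂μ = ∫ ω in u, A ω ∂μ) hgen hpi
      (by simp)
      ?_ ?_ ?_
    · exact fun u hu => main u hu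
    -- basic case: u = G ∩ S
    · rintro u ⟨G, S, hG, hS, rfl⟩
      have hGΩ : MeasurableSet[mΩ] G := h𝓖 _ hG
      have hSΩ : MeasurableSet[mΩ] S := hmY _ hS
      have hprodST := hCI' S t hS htA
      have hSind : Integrable (S.indicator fun _ => (1:ℝ)) μ :=
        aux_integrable_of_bounded (measurable_const.indicator hSΩ).aestronglyMeasurable
          (M := 1) (fun ω => by by_cases h : ω ∈ S <;> simp [h])
      have hStind : Integrable ((S ∩ t).indicator fun _ => (1:ℝ)) μ :=
        aux_integrable_of_bounded
          (measurable_const.indicator (hSΩ.inter htΩ)).aestronglyMeasurable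
          (M := 1) (fun ω => by by_cases h : ω ∈ S ∩ t <;> simp [h])
      have hgt : (fun ω => g (X ω)) =ᵐ[μ] μ⟦t|𝓖⟧ := by rw [← hAeq]; exact hgver
      have hψ : StronglyMeasurable[𝓖] fun ω => G.indicator (fun _ => (1:ℝ)) ω * g (X ω) :=
        ((measurable_const.indicator hG).mul hgXm).stronglyMeasurable
      have hψb : ∀ ω, |G.indicator (fun _ => (1:ℝ)) ω * g (X ω)| ≤ 1 := by
        intro ω; rw [abs_mul]
        by_cases h : ω ∈ G
        · simpa [h] using hgXb ω
        · simp [h]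
      have hL : ∫ ω in G ∩ S, g (X ω) ∂μ
          = ∫ ω in G, g (X ω) * (μ⟦S|𝓖⟧) ω ∂μ := by
        calc ∫ ω in G ∩ S, g (X ω) ∂μ
            = ∫ ω, (G.indicator (fun _ => (1:ℝ)) ω * g (X ω))
                * S.indicator (fun _ => (1:ℝ)) ω ∂μ := by
              rw [← integral_indicator (hGΩ.inter hSΩ)]
              refine integral_congr_ae (Filter.Eventually.of_forall fun ω => ?_)
              by_cases h1 : ω ∈ G <;> by_cases h2 : ω ∈ S <;>
                simp [Set.indicator_apply, Set.mem_inter_iff, h1, h2]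
          _ = ∫ ω, (G.indicator (fun _ => (1:ℝ)) ω * g (X ω))
                * (μ[S.indicator (fun _ => (1:ℝ))|𝓖]) ω ∂μ :=
              (aux_integral_mul_condexp h𝓖 hψ hψb hSind).symm
          _ = ∫ ω in G, g (X ω) * (μ⟦S|𝓖⟧) ω ∂μ := by
              rw [← integral_indicator hGΩ]
              refine integral_congr_ae (Filter.Eventually.of_forall fun ω => ?_)
              by_cases h1 : ω ∈ G <;> simp [Set.indicator_apply, h1]
      have hR : ∫ ω in G ∩ S, A ω ∂μ
          = ∫ ω in G, (μ⟦S|𝓖⟧) ω * (μ⟦t|𝓖⟧) ω ∂μ := by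
        calc ∫ ω in G ∩ S, A ω ∂μ
            = ∫ ω in (G ∩ S) ∩ t, (1:ℝ) ∂μ := by
              rw [hAeq, setIntegral_indicator htΩ]
          _ = ∫ ω in G ∩ (S ∩ t), (1:ℝ) ∂μ := by rw [Set.inter_assoc]
          _ = ∫ ω in G, (S ∩ t).indicator (fun _ => (1:ℝ)) ω ∂μ :=
              (setIntegral_indicator (hSΩ.inter htΩ)).symm
          _ = ∫ ω in G, (μ⟦S ∩ t|𝓖⟧) ω ∂μ :=
              (setIntegral_condExp h𝓖 hStind hG).symm
          _ = ∫ ω in G, (μ⟦S|𝓖⟧) ω * (μ⟦t|𝓖⟧) ω ∂μ := by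
              refine setIntegral_congr_ae hGΩ ?_
              filter_upwards [hprodST] with ω h _
              exact h
      rw [hL, hR]
      refine setIntegral_congr_ae hGΩ ?_
      filter_upwards [hgt] with ω h _
      rw [h, mul_comm]
    -- complement
    · intro u hu hC
      have huΩ : MeasurableSet[mΩ] u := hm2 _ hu
      have h1 := integral_add_compl huΩ hgXint
      have h2 := integral_add_compl huΩ hAint
      linarith
    -- disjoint union
    · intro f hdisj hmeas hC
      have hfΩ : ∀ i, MeasurableSet[mΩ] (f i) := fun i => hm2 _ (hmeas i)
      have h1 := hasSum_integral_iUnion hfΩ hdisj hgXint.integrableOn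
      have h2 := hasSum_integral_iUnion hfΩ hdisj hAint.integrableOn
      have he : (fun i => ∫ ω in f i, g (X ω) ∂μ) = fun i => ∫ ω in f i, A ω ∂μ :=
        funext hC
      rw [he] at h1
      exact h1.unique h2
  -- KEY STEP 2: g(X) is a version of E[A | m2]
  have hcondA2 : (fun ω => g (X ω)) =ᵐ[μ] μ[A|m2] := by
    refine ae_eq_condExp_of_forall_setIntegral_eq hm2 hAint
      (fun s _ _ => hgXint.integrableOn) (fun s hs _ => key s hs) ?_
    exact StronglyMeasurable.aestronglyMeasurable
      ((hgXm.mono h𝓖m2 le_rfl).stronglyMeasurable)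
  -- KEY STEP 3: E[A·Y₁ | 𝓖] = E[Y₁|𝓖]·g(X)
  have hprod2 : (fun ω => (μ[Y₁|𝓖]) ω * g (X ω)) =ᵐ[μ] μ[fun ω => A ω * Y₁ ω|𝓖] := by
    refine ae_eq_condExp_of_forall_setIntegral_eq h𝓖 hAY₁int ?_ ?_ ?_
    · intro s _ _
      have hint : Integrable (fun ω => g (X ω) * (μ[Y₁|𝓖]) ω) μ :=
        integrable_condExp.bdd_mul (hgXm.mono h𝓖 le_rfl).aestronglyMeasurable
          (Filter.Eventually.of_forall fun ω => by simpa [Real.norm_eq_abs] using hgXb ω)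
      exact (by simpa [mul_comm] using hint : Integrable _ μ).integrableOn
    · intro G hG _
      have hGΩ : MeasurableSet[mΩ] G := h𝓖 _ hG
      have hψ : StronglyMeasurable[𝓖] fun ω => G.indicator (fun _ => (1:ℝ)) ω * g (X ω) :=
        ((measurable_const.indicator hG).mul hgXm).stronglyMeasurable
      have hψb : ∀ ω, |G.indicator (fun _ => (1:ℝ)) ω * g (X ω)| ≤ 1 := by
        intro ω; rw [abs_mul]
        by_cases h : ω ∈ G
        · simpa [h] using hgXb ω
        · simp [h]
      have hψ2 : StronglyMeasurable[m2] fun ω => G.indicator (fun _ => (1:ℝ)) ω * Y₁ ω :=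
        ((measurable_const.indicator (h𝓖m2 _ hG)).mul hY₁m2).stronglyMeasurable
      have hψ2b : ∀ ω, |G.indicator (fun _ => (1:ℝ)) ω * Y₁ ω| ≤ |M₁'| := by
        intro ω; rw [abs_mul]
        by_cases h : ω ∈ G
        · simpa [h] using hM₁ ω
        · simp [h, abs_nonneg]
      calc ∫ ω in G, (μ[Y₁|𝓖]) ω * g (X ω) ∂μ
          = ∫ ω, (G.indicator (fun _ => (1:ℝ)) ω * g (X ω)) * (μ[Y₁|𝓖]) ω ∂μ := by
            rw [← integral_indicator hGΩ]
            refine integral_congr_ae (Filter.Eventually.of_forall fun ω => ?_)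
            by_cases h1 : ω ∈ G <;> simp [Set.indicator_apply, h1, mul_comm]
        _ = ∫ ω, (G.indicator (fun _ => (1:ℝ)) ω * g (X ω)) * Y₁ ω ∂μ :=
            aux_integral_mul_condexp h𝓖 hψ hψb hY₁int
        _ = ∫ ω, (G.indicator (fun _ => (1:ℝ)) ω * Y₁ ω) * g (X ω) ∂μ := by
            refine integral_congr_ae (Filter.Eventually.of_forall fun ω => ?_)
            ring
        _ = ∫ ω, (G.indicator (fun _ => (1:ℝ)) ω * Y₁ ω) * (μ[A|m2]) ω ∂μ := by
            refine integral_congr_ae ?_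
            filter_upwards [hcondA2] with ω h
            rw [h]
        _ = ∫ ω, (G.indicator (fun _ => (1:ℝ)) ω * Y₁ ω) * A ω ∂μ :=
            aux_integral_mul_condexp hm2 hψ2 hψ2b hAint
        _ = ∫ ω in G, A ω * Y₁ ω ∂μ := by
            rw [← integral_indicator hGΩ]
            refine integral_congr_ae (Filter.Eventually.of_forall fun ω => ?_)
            by_cases h1 : ω ∈ G <;> simp [Set.indicator_apply, h1] <;> ring
    · exact StronglyMeasurable.aestronglyMeasurable
        (stronglyMeasurable_condExp.mul hgXm.stronglyMeasurable)
  -- identify m₁(X) with E[Y₁|𝓖]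
  have hAY : (fun ω => A ω * Y ω) = fun ω => A ω * Y₁ ω := by
    funext ω
    rcases hAval ω with h | h <;> (rw [hYdef ω, h]; ring)
  have hident : (fun ω => m₁ (X ω)) =ᵐ[μ] μ[Y₁|𝓖] := by
    have h1 : (fun ω => m₁ (X ω) * g (X ω)) =ᵐ[μ] fun ω => (μ[Y₁|𝓖]) ω * g (X ω) := by
      have h2 := hprod2.symm
      rw [← hAY] at h2
      exact hm₁ver.trans h2
    filter_upwards [h1] with ω h
    exact mul_right_cancel₀ (ne_of_gt (lt_of_lt_of_le hc (hglb (X ω)))) h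
  -- E[A·Y − A·m₁(X) | 𝓖] = 0
  have hm₁XAint : Integrable (fun ω => m₁ (X ω) * A ω) μ := by
    simpa [mul_comm] using hAm₁Xint
  have hpull : μ[fun ω => m₁ (X ω) * A ω|𝓖]
      =ᵐ[μ] fun ω => m₁ (X ω) * (μ[A|𝓖]) ω :=
    condExp_mul_of_stronglyMeasurable_left hm₁Xm.stronglyMeasurable hm₁XAint hAint
  have hzero : μ[fun ω => A ω * Y ω - A ω * m₁ (X ω)|𝓖] =ᵐ[μ] fun _ => (0:ℝ) := by
    have hsub : μ[fun ω => A ω * Y ω - A ω * m₁ (X ω)|𝓖]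
        =ᵐ[μ] μ[fun ω => A ω * Y ω|𝓖] - μ[fun ω => A ω * m₁ (X ω)|𝓖] :=
      condExp_sub hAYint hAm₁Xint 𝓖
    have hcomm : (fun ω => A ω * m₁ (X ω)) = fun ω => m₁ (X ω) * A ω := by
      funext ω; ring
    rw [hcomm] at hsub
    filter_upwards [hsub, hpull, hm₁ver, hgver] with ω h1 h2 h3 h4
    have : (μ[fun ω => A ω * Y ω|𝓖]) ω = m₁ (X ω) * (μ[A|𝓖]) ω := by
      rw [← h3, ← h4]
    rw [h1, Pi.sub_apply, h2, this]
    ring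
  -- final computation
  have hfin1 : Integrable (fun ω => A ω / ghat (X ω) * (Y ω - m₁ (X ω))) μ := by
    refine aux_integrable_of_bounded
      (((hA.div (hghat.comp hX)).mul (hYm.sub (hm₁.comp hX))).aestronglyMeasurable)
      (M := 1/c * ((|M₁'| + |M₀'|) + |Mm'|)) fun ω => ?_
    have hgpos : 0 < ghat (X ω) := lt_of_lt_of_le hc (hghlb _)
    have h1 : |A ω / ghat (X ω)| ≤ 1/c := by
      rw [abs_div, abs_of_pos hgpos]
      exact div_le_div₀ zero_le_one (hAb ω) hc (hghlb _)
    have h2 : |Y ω - m₁ (X ω)| ≤ (|M₁'| + |M₀'|) + |Mm'| :=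
      (abs_sub (Y ω) (m₁ (X ω))).trans (add_le_add (hYb ω) (hMm (X ω)))
    rw [abs_mul]
    exact mul_le_mul h1 h2 (abs_nonneg _) (by positivity)
  rw [integral_add hfin1 hm₁Xint]
  have hz : ∫ ω, A ω / ghat (X ω) * (Y ω - m₁ (X ω)) ∂μ = 0 := by
    have e : ∀ ω, A ω / ghat (X ω) * (Y ω - m₁ (X ω))
        = (ghat (X ω))⁻¹ * (A ω * Y ω - A ω * m₁ (X ω)) := fun ω => by
      rw [div_eq_mul_inv]; ring
    rw [integral_congr_ae (Filter.Eventually.of_forall e)]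
    have hψsm : StronglyMeasurable[𝓖] fun ω => (ghat (X ω))⁻¹ :=
      ((hghat.comp hXm).inv).stronglyMeasurable
    have hψb : ∀ ω, |(ghat (X ω))⁻¹| ≤ 1/c := by
      intro ω
      rw [abs_of_pos (inv_pos.mpr (lt_of_lt_of_le hc (hghlb _))), one_div]
      exact inv_anti₀ hc (hghlb _)
    have hfint : Integrable (fun ω => A ω * Y ω - A ω * m₁ (X ω)) μ :=
      hAYint.sub hAm₁Xint
    rw [← aux_integral_mul_condexp h𝓖 hψsm hψb hfint]
    have hz2 : (fun ω => (ghat (X ω))⁻¹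
        * (μ[fun ω => A ω * Y ω - A ω * m₁ (X ω)|𝓖]) ω) =ᵐ[μ] fun _ => (0:ℝ) := by
      filter_upwards [hzero] with ω h
      rw [h]
      ring
    rw [integral_congr_ae hz2, integral_zero]
  rw [hz, zero_add, integral_congr_ae hident]
  exact integral_condExp h𝓖

/-- Double robustness of the AIPW functional when the outcome model is correct:
for every (possibly misspecified) propensity model ghat with c ≤ ghat ≤ 1,
E[(A/ghat(X))·(Y − m₁(X)) + m₁(X)] = E[Y₁]. -/
theorem aipw_double_robust_outcome
    {Ω : Type*} [MeasurableSpace Ω] [StandardBorelSpace Ω]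
    (μ : Measure Ω) [IsProbabilityMeasure μ]
    {d : ℕ} (A Y Y₁ Y₀ : Ω → ℝ) (X : Ω → (Fin d → ℝ))
    (g m₁ : (Fin d → ℝ) → ℝ) (c : ℝ)
    (hA : Measurable A) (hAval : ∀ ω, A ω = 0 ∨ A ω = 1)
    (hY₁ : Measurable Y₁) (hY₀ : Measurable Y₀)
    (hY₁b : ∃ M, ∀ ω, |Y₁ ω| ≤ M) (hY₀b : ∃ M, ∀ ω, |Y₀ ω| ≤ M)
    (hYdef : ∀ ω, Y ω = A ω * Y₁ ω + (1 - A ω) * Y₀ ω)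
    (hX : Measurable X) (hg : Measurable g)
    (hCI : CondIndep (MeasurableSpace.comap X inferInstance)
      (MeasurableSpace.comap Y₁ inferInstance)
      (MeasurableSpace.comap A inferInstance)
      hX.comap_le μ)
    (hc : 0 < c) (hc2 : c < 1/2) (hglb : ∀ x, c ≤ g x) (hgub : ∀ x, g x ≤ 1 - c)
    (hgver : (fun ω => g (X ω)) =ᵐ[μ] μ[A | MeasurableSpace.comap X inferInstance])
    (hm₁ : Measurable m₁) (hm₁b : ∃ M, ∀ x, |m₁ x| ≤ M)
    (hm₁ver : (fun ω => m₁ (X ω) * g (X ω))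
      =ᵐ[μ] μ[fun ω => A ω * Y ω | MeasurableSpace.comap X inferInstance]) :
    ∀ (ghat : (Fin d → ℝ) → ℝ), Measurable ghat → (∀ x, c ≤ ghat x) → (∀ x, ghat x ≤ 1) →
      ∫ ω, (A ω / ghat (X ω)) * (Y ω - m₁ (X ω)) + m₁ (X ω) ∂μ = ∫ ω, Y₁ ω ∂μ :=
  aipw_aux μ A Y Y₁ Y₀ X g m₁ c hA hAval hY₁ hY₀ hY₁b hY₀b hYdef hX hg hCI hc hc2
    hglb hgub hgver hm₁ hm₁b hm₁ver
end

section
/- Let (Ω, 𝓕, μ) be a standard Borel probability space. Let A, S : Ω → ℝ take values in {0,1}, let Y₁, Y₀ be bounded real-valued random variables, set Y = A·Y₁ + (1 − A)·Y₀, let X : Ω → ℝ^d be measurable. Suppose Y₁ is conditionally independent of A given σ(X), and the pair (Y, A) is conditionally independent of S given σ(X) (covariate-dependent validation). Let g, κ : ℝ^d → ℝ be measurable with c ≤ g(x) ≤ 1 − c and c ≤ κ(x) ≤ 1 for all x, for some 0 < c < 1/2, such that g ∘ X is a version of E[A | σ(X)] and κ ∘ X is a version of E[S | σ(X)]. Then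 E[A·S·Y / (κ(X)·g(X))] = E[Y₁]. (Population version of the weighted generalization identification of the target counterfactual mean, Equation (gen-functional).) -/
open MeasureTheory ProbabilityTheory

open MeasurableSpace Set
lemma countable_generatePiSystem {α : Type*} {S : Set (Set α)} (hS : S.Countable) :
    (generatePiSystem S).Countable := by
  have hsub : generatePiSystem S ⊆ sInter '' { F : Set (Set α) | F.Finite ∧ F ⊆ S } := by
    intro t ht
    induction ht with
    | base h => exact ⟨{_}, ⟨Set.finite_singleton _, by simpa⟩, by simp⟩
    | inter hs ht hne ihs iht =>
      obtain ⟨F, ⟨hFfin, hFS⟩, rfl⟩ := ihs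
      obtain ⟨G, ⟨hGfin, hGS⟩, rfl⟩ := iht
      exact ⟨F ∪ G, ⟨hFfin.union hGfin, Set.union_subset hFS hGS⟩, by rw [Set.sInter_union]⟩
  exact ((Set.countable_setOf_finite_subset hS).image _).mono hsub

lemma exists_countable_pisystem_comap {Ω β : Type*} [mβ : MeasurableSpace β]
    [MeasurableSpace.CountablyGenerated β] (f : Ω → β) :
    ∃ C : Set (Set Ω), C.Countable ∧ IsPiSystem C ∧
      MeasurableSpace.comap f mβ = MeasurableSpace.generateFrom C := by
  refine ⟨preimage f '' generatePiSystem (countableGeneratingSet β),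
    (countable_generatePiSystem (countable_countableGeneratingSet)).image _,
    (isPiSystem_generatePiSystem _).comap f, ?_⟩
  conv_lhs => rw [← generateFrom_countableGeneratingSet (α := β),
    ← generateFrom_generatePiSystem_eq (g := countableGeneratingSet β)]
  rw [comap_generateFrom]

lemma condexp_mul_indicator_of_condIndep {Ω : Type*} {mΩ : MeasurableSpace Ω}
    [StandardBorelSpace Ω] {μ : Measure Ω} [IsProbabilityMeasure μ]
    {m' m₁ m₂ : MeasurableSpace Ω} (hm' : m' ≤ mΩ) (hm₁ : m₁ ≤ mΩ) (hm₂ : m₂ ≤ mΩ)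
    (hCI : CondIndep m' m₁ m₂ hm' μ)
    {C : Set (Set Ω)} (hCc : C.Countable) (hCpi : IsPiSystem C)
    (hCgen : m₁ = MeasurableSpace.generateFrom C)
    {W : Ω → ℝ} (hW : Measurable[m₁] W) {M : ℝ} (hWb : ∀ ω, |W ω| ≤ M)
    {t : Set Ω} (ht : MeasurableSet[m₂] t) :
    μ[fun ω => W ω * t.indicator (fun _ => (1:ℝ)) ω | m'] =ᵐ[μ]
      fun ω => ((μ[W | m']) ω) * ((μ[t.indicator (fun _ => (1:ℝ)) | m']) ω) := by
  have htΩ : MeasurableSet[mΩ] t := hm₂ _ ht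
  have hWmΩ : Measurable[mΩ] W := hW.mono hm₁ le_rfl
  have hWb' : ∀ ω, |W ω| ≤ |M| := fun ω => (hWb ω).trans (le_abs_self M)
  -- integrability
  have hWint : Integrable W μ := by
    refine Integrable.mono' (integrable_const |M|) hWmΩ.aestronglyMeasurable ?_
    exact Filter.Eventually.of_forall fun ω => by simpa [Real.norm_eq_abs] using hWb' ω
  have hindmeas : Measurable[mΩ] (t.indicator (fun _ => (1:ℝ))) :=
    measurable_const.indicator htΩ
  have hindint : Integrable (t.indicator (fun _ => (1:ℝ))) μ := by
    refine Integrable.mono' (integrable_const 1) hindmeas.aestronglyMeasurable ?_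
    refine Filter.Eventually.of_forall fun ω => ?_
    by_cases hω : ω ∈ t <;> simp [Real.norm_eq_abs, Set.indicator_apply, hω]
  have hprodint : Integrable (fun ω => W ω * t.indicator (fun _ => (1:ℝ)) ω) μ := by
    refine Integrable.mono' (integrable_const |M|)
      (hWmΩ.mul hindmeas).aestronglyMeasurable ?_
    refine Filter.Eventually.of_forall fun ω => ?_
    by_cases hω : ω ∈ t <;>
      simp [Real.norm_eq_abs, Set.indicator_apply, hω, abs_mul, hWb' ω, abs_nonneg]
  -- the kernel independence statement on the generating π-system
  have hk : ∀ᵐ ω ∂μ, ∀ s ∈ C,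
      condExpKernel (mΩ := mΩ) μ m' ω (s ∩ t) = condExpKernel (mΩ := mΩ) μ m' ω s * condExpKernel (mΩ := mΩ) μ m' ω t := by
    rw [ae_ball_iff hCc]
    intro s hs
    exact ae_of_ae_trim hm'
      (hCI s t (by rw [hCgen]; exact measurableSet_generateFrom hs) ht)
  have h1 := condExp_ae_eq_integral_condExpKernel (mΩ := mΩ) hm' hprodint
  have h2 := condExp_ae_eq_integral_condExpKernel (mΩ := mΩ) hm' hWint
  have h3 := condExp_ae_eq_integral_condExpKernel (mΩ := mΩ) hm' hindint
  filter_upwards [hk, h1, h2, h3] with ω hkω h1ω h2ω h3ω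
  rw [h1ω, h2ω, h3ω]
  set ν : @Measure Ω mΩ := condExpKernel (mΩ := mΩ) μ m' ω with hν
  haveI : IsProbabilityMeasure ν := by rw [hν]; infer_instance
  -- the two measures agree after trimming to m₁
  have hmeq : (ν.restrict t).trim hm₁ = ((ν t) • ν).trim hm₁ := by
    refine @MeasureTheory.ext_of_generate_finite Ω m₁ _ _ C hCgen hCpi ?_ ?_ ?_
    · infer_instance
    · intro s hs
      have hsm₁ : MeasurableSet[m₁] s := by rw [hCgen]; exact measurableSet_generateFrom hs
      have hsmΩ : MeasurableSet[mΩ] s := hm₁ _ hsm₁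
      rw [trim_measurableSet_eq hm₁ hsm₁, trim_measurableSet_eq hm₁ hsm₁,
        Measure.restrict_apply hsmΩ, Measure.smul_apply, smul_eq_mul, hkω s hs, mul_comm]
    · rw [trim_measurableSet_eq hm₁ (@MeasurableSet.univ Ω m₁),
        trim_measurableSet_eq hm₁ (@MeasurableSet.univ Ω m₁),
        Measure.restrict_apply_univ,
        Measure.smul_apply, smul_eq_mul, measure_univ, mul_one]
  have hWsm : StronglyMeasurable[m₁] W := hW.stronglyMeasurable
  have e1 : ∫ y, W y * t.indicator (fun _ => (1:ℝ)) y ∂ν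
      = ∫ y, t.indicator W y ∂ν := by
    refine integral_congr_ae (Filter.Eventually.of_forall fun y => ?_)
    by_cases hy : y ∈ t <;> simp [Set.indicator_apply, hy]
  have e0 : ∫ y, t.indicator W y ∂ν = ∫ y in t, W y ∂ν :=
    @integral_indicator Ω ℝ mΩ _ _ W t ν htΩ
  have e2 : ∫ y in t, W y ∂ν = ∫ y, W y ∂((ν.restrict t).trim hm₁) :=
    integral_trim hm₁ hWsm
  have e3 : ∫ y, W y ∂((ν t) • ν) = ∫ y, W y ∂(((ν t) • ν).trim hm₁) :=
    integral_trim hm₁ hWsm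
  have e4 : ∫ y, t.indicator (fun _ => (1:ℝ)) y ∂ν = (ν t).toReal :=
    @integral_indicator_one Ω mΩ ν t htΩ
  have e5 : ∫ y, W y ∂((ν t) • ν) = (ν t).toReal • ∫ y, W y ∂ν :=
    integral_smul_measure _ _
  rw [e1, e0, e2, hmeq, ← e3, e5, e4, smul_eq_mul, mul_comm]

/-- Weighted generalization identification of the target counterfactual mean:
under unconfoundedness, covariate-dependent validation and positivity,
E[A·S·Y / (κ(X)·g(X))] = E[Y₁]. -/
theorem weighted_generalization_identification
    {Ω : Type*} [MeasurableSpace Ω] [StandardBorelSpace Ω]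
    (μ : Measure Ω) [IsProbabilityMeasure μ]
    {d : ℕ} (A S Y Y₁ Y₀ : Ω → ℝ) (X : Ω → (Fin d → ℝ))
    (g κ : (Fin d → ℝ) → ℝ) (c : ℝ)
    (hA : Measurable A) (hAval : ∀ ω, A ω = 0 ∨ A ω = 1)
    (hS : Measurable S) (hSval : ∀ ω, S ω = 0 ∨ S ω = 1)
    (hY₁ : Measurable Y₁) (hY₀ : Measurable Y₀)
    (hY₁b : ∃ M, ∀ ω, |Y₁ ω| ≤ M) (hY₀b : ∃ M, ∀ ω, |Y₀ ω| ≤ M)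
    (hYdef : ∀ ω, Y ω = A ω * Y₁ ω + (1 - A ω) * Y₀ ω)
    (hX : Measurable X) (hg : Measurable g) (hκ : Measurable κ)
    (hCI : CondIndep (MeasurableSpace.comap X inferInstance)
      (MeasurableSpace.comap Y₁ inferInstance)
      (MeasurableSpace.comap A inferInstance)
      hX.comap_le μ)
    (hCIS : CondIndep (MeasurableSpace.comap X inferInstance)
      (MeasurableSpace.comap (fun ω => (Y ω, A ω)) inferInstance)
      (MeasurableSpace.comap S inferInstance)
      hX.comap_le μ)
    (hc : 0 < c) (hc2 : c < 1/2)
    (hglb : ∀ x, c ≤ g x) (hgub : ∀ x, g x ≤ 1 - c)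
    (hκlb : ∀ x, c ≤ κ x) (hκub : ∀ x, κ x ≤ 1)
    (hgver : (fun ω => g (X ω)) =ᵐ[μ] μ[A | MeasurableSpace.comap X inferInstance])
    (hκver : (fun ω => κ (X ω)) =ᵐ[μ] μ[S | MeasurableSpace.comap X inferInstance]) :
    ∫ ω, A ω * S ω * Y ω / (κ (X ω) * g (X ω)) ∂μ = ∫ ω, Y₁ ω ∂μ := by
  obtain ⟨M₁, hM₁⟩ := hY₁b
  obtain ⟨M₀, hM₀⟩ := hY₀b
  have hYm : Measurable Y := by
    have h : Y = fun ω => A ω * Y₁ ω + (1 - A ω) * Y₀ ω := funext hYdef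
    rw [h]; exact (hA.mul hY₁).add ((measurable_const.sub hA).mul hY₀)
  have hYA : Measurable (fun ω => (Y ω, A ω)) := hYm.prodMk hA
  -- indicator representations of A and S
  set tA : Set Ω := A ⁻¹' {1} with htAdef
  set tS : Set Ω := S ⁻¹' {1} with htSdef
  have htA : MeasurableSet[MeasurableSpace.comap A inferInstance] tA :=
    ⟨{1}, measurableSet_singleton 1, rfl⟩
  have htS : MeasurableSet[MeasurableSpace.comap S inferInstance] tS :=
    ⟨{1}, measurableSet_singleton 1, rfl⟩
  have hAind : ∀ ω, A ω = tA.indicator (fun _ => (1:ℝ)) ω := by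
    intro ω; rcases hAval ω with h | h <;>
      simp [Set.indicator_apply, htAdef, Set.mem_preimage, h]
  have hSind : ∀ ω, S ω = tS.indicator (fun _ => (1:ℝ)) ω := by
    intro ω; rcases hSval ω with h | h <;>
      simp [Set.indicator_apply, htSdef, Set.mem_preimage, h]
  -- countable generating π-systems
  obtain ⟨C₁, hC₁c, hC₁pi, hC₁gen⟩ := exists_countable_pisystem_comap (Ω := Ω) (β := ℝ) Y₁
  obtain ⟨C₂, hC₂c, hC₂pi, hC₂gen⟩ :=
    exists_countable_pisystem_comap (Ω := Ω) (β := ℝ × ℝ) (fun ω => (Y ω, A ω))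
  -- measurability w.r.t. the comap σ-algebras
  have hY₁m₁ : Measurable[MeasurableSpace.comap Y₁ inferInstance] Y₁ :=
    Measurable.of_comap_le le_rfl
  have hpairm : Measurable[MeasurableSpace.comap (fun ω => (Y ω, A ω)) inferInstance]
      (fun ω => (Y ω, A ω)) := Measurable.of_comap_le le_rfl
  have hWm : Measurable[MeasurableSpace.comap (fun ω => (Y ω, A ω)) inferInstance]
      (fun ω => A ω * Y ω) := (measurable_snd.mul measurable_fst).comp hpairm
  -- bounds
  have hYb : ∀ ω, |Y ω| ≤ |M₁| + |M₀| := by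
    intro ω; rcases hAval ω with h | h
    · rw [hYdef ω, h]
      simp only [zero_mul, zero_add, sub_zero, one_mul]
      linarith [hM₀ ω, le_abs_self M₀, abs_nonneg M₁]
    · rw [hYdef ω, h]
      simp only [one_mul, sub_self, zero_mul, add_zero]
      linarith [hM₁ ω, le_abs_self M₁, abs_nonneg M₀]
  have hWb : ∀ ω, |A ω * Y ω| ≤ |M₁| + |M₀| := by
    intro ω; rcases hAval ω with h | h
    · rw [h, zero_mul, abs_zero]; positivity
    · rw [h, one_mul]; exact hYb ω
  -- the two product formulas for conditional expectations
  have E1 := condexp_mul_indicator_of_condIndep hX.comap_le hYA.comap_le hS.comap_le hCIS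
    hC₂c hC₂pi hC₂gen hWm hWb htS
  have E2 := condexp_mul_indicator_of_condIndep hX.comap_le hY₁.comap_le hA.comap_le hCI
    hC₁c hC₁pi hC₁gen hY₁m₁ hM₁ htA
  -- rewrite the versions
  have hAfun : A = tA.indicator (fun _ => (1:ℝ)) := funext hAind
  have hSfun : S = tS.indicator (fun _ => (1:ℝ)) := funext hSind
  have hgver' : μ[tA.indicator (fun _ => (1:ℝ)) | MeasurableSpace.comap X inferInstance]
      =ᵐ[μ] fun ω => g (X ω) := by rw [← hAfun]; exact hgver.symm
  have hκver' : μ[tS.indicator (fun _ => (1:ℝ)) | MeasurableSpace.comap X inferInstance]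
      =ᵐ[μ] fun ω => κ (X ω) := by rw [← hSfun]; exact hκver.symm
  have hAYfun : (fun ω => Y₁ ω * tA.indicator (fun _ => (1:ℝ)) ω) = fun ω => A ω * Y ω := by
    funext ω
    rw [← hAind ω]
    rcases hAval ω with h | h
    · rw [h]; ring
    · rw [h, hYdef ω, h]; ring
  rw [hAYfun] at E2
  -- positivity facts
  have hκpos : ∀ x, 0 < κ x := fun x => lt_of_lt_of_le hc (hκlb x)
  have hgpos : ∀ x, 0 < g x := fun x => lt_of_lt_of_le hc (hglb x)
  -- integrability
  have hbint : ∀ (f : Ω → ℝ) (M : ℝ), Measurable f → (∀ ω, |f ω| ≤ M) → Integrable f μ := by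
    intro f M hf hM
    exact Integrable.mono' (integrable_const M) hf.aestronglyMeasurable
      (Filter.Eventually.of_forall fun ω => by simpa [Real.norm_eq_abs] using hM ω)
  have hY₁int : Integrable Y₁ μ := hbint _ _ hY₁ hM₁
  have hindSmeas : Measurable (tS.indicator (fun _ => (1:ℝ))) :=
    measurable_const.indicator (hS (measurableSet_singleton 1))
  have hVmeas : Measurable (fun ω => (A ω * Y ω) * tS.indicator (fun _ => (1:ℝ)) ω) :=
    (hA.mul hYm).mul hindSmeas
  have hVb : ∀ ω, |(A ω * Y ω) * tS.indicator (fun _ => (1:ℝ)) ω| ≤ |M₁| + |M₀| := by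
    intro ω
    by_cases hω : ω ∈ tS
    · simp only [Set.indicator_of_mem hω, mul_one]; exact hWb ω
    · simp only [Set.indicator_of_notMem hω, mul_zero, abs_zero]; positivity
  have hVint : Integrable (fun ω => (A ω * Y ω) * tS.indicator (fun _ => (1:ℝ)) ω) μ :=
    hbint _ _ hVmeas hVb
  have hfmeas : Measurable (fun ω => A ω * S ω * Y ω / (κ (X ω) * g (X ω))) :=
    ((hA.mul hS).mul hYm).div ((hκ.comp hX).mul (hg.comp hX))
  have hfb : ∀ ω, |A ω * S ω * Y ω / (κ (X ω) * g (X ω))| ≤ (|M₁| + |M₀|) / (c * c) := by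
    intro ω
    have hpos : 0 < κ (X ω) * g (X ω) := mul_pos (hκpos _) (hgpos _)
    rw [abs_div, abs_of_pos hpos]
    have hnum : |A ω * S ω * Y ω| ≤ |M₁| + |M₀| := by
      rcases hAval ω with h | h
      · rw [h]; simp; positivity
      · rcases hSval ω with h' | h'
        · rw [h']; simp; positivity
        · rw [h, h', one_mul, one_mul]; exact hYb ω
    refine div_le_div₀ (by positivity) hnum (by positivity) ?_
    exact mul_le_mul (hκlb _) (hglb _) hc.le (le_trans hc.le (hκlb _))
  have hfint : Integrable (fun ω => A ω * S ω * Y ω / (κ (X ω) * g (X ω))) μ :=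
    hbint _ _ hfmeas hfb
  -- pull-out of the σ(X)-measurable factor
  have hXc : Measurable[MeasurableSpace.comap X inferInstance] X := Measurable.of_comap_le le_rfl
  have hhX : StronglyMeasurable[MeasurableSpace.comap X inferInstance]
      (fun ω => (κ (X ω) * g (X ω))⁻¹) :=
    (((hκ.mul hg).inv).comp hXc).stronglyMeasurable
  have hfun' : (fun ω => A ω * S ω * Y ω / (κ (X ω) * g (X ω))) =
      (fun ω => (κ (X ω) * g (X ω))⁻¹) *
        (fun ω => (A ω * Y ω) * tS.indicator (fun _ => (1:ℝ)) ω) := by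
    funext ω
    show A ω * S ω * Y ω / (κ (X ω) * g (X ω)) =
      (κ (X ω) * g (X ω))⁻¹ * ((A ω * Y ω) * tS.indicator (fun _ => (1:ℝ)) ω)
    rw [← hSind ω, div_eq_mul_inv]; ring
  have step1 : μ[(fun ω => A ω * S ω * Y ω / (κ (X ω) * g (X ω))) |
        MeasurableSpace.comap X inferInstance] =ᵐ[μ]
      (fun ω => (κ (X ω) * g (X ω))⁻¹) *
        μ[(fun ω => (A ω * Y ω) * tS.indicator (fun _ => (1:ℝ)) ω) |
          MeasurableSpace.comap X inferInstance] := by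
    rw [hfun']
    exact condExp_mul_of_stronglyMeasurable_left hhX (by rw [← hfun']; exact hfint) hVint
  -- conclude
  haveI : SigmaFinite (μ.trim hX.comap_le) := inferInstance
  rw [← integral_condExp hX.comap_le (f := fun ω => A ω * S ω * Y ω / (κ (X ω) * g (X ω))),
    ← integral_condExp hX.comap_le (f := Y₁)]
  refine integral_congr_ae ?_
  filter_upwards [step1, E1, E2, hgver', hκver'] with ω h1 h2 h3 h4 h5
  have hκ0 : κ (X ω) ≠ 0 := (hκpos _).ne'
  have hg0 : g (X ω) ≠ 0 := (hgpos _).ne'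
  rw [h1, Pi.mul_apply, h2, h3, h4, h5]
  field_simp
end

section
/- Let (Ω, 𝓕, μ) be a standard Borel probability space. Let A*, S : Ω → ℝ take values in {0,1}, let Y be a bounded real-valued random variable, and let X : Ω → ℝ^d be measurable. Suppose the pair (Y, A*) is conditionally independent of S given σ(X). Let g*, κ : ℝ^d → ℝ be measurable with c ≤ g*(x) ≤ 1 − c and c ≤ κ(x) ≤ 1 for all x, for some 0 < c < 1/2, such that g* ∘ X is a version of E[A* | σ(X)] and κ ∘ X is a version of E[S | σ(X)]. Then E[A*·S·Y / (κ(X)·g*(X))] = E[A*·Y / g*(X)]. (The population equality in Equation (3) ensuring the error-prone validation-data and main-data functionals coincide, so the control variate is mean zero.) -/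
open MeasureTheory ProbabilityTheory
open scoped NNReal ENNReal

/-- Equality of the error-prone validation-data and main-data functionals:
E[A*·S·Y / (κ(X)·g*(X))] = E[A*·Y / g*(X)], ensuring the control variate is mean zero. -/
theorem error_prone_functionals_coincide
    {Ω : Type*} [MeasurableSpace Ω] [StandardBorelSpace Ω]
    (μ : Measure Ω) [IsProbabilityMeasure μ]
    {d : ℕ} (Astar S Y : Ω → ℝ) (X : Ω → (Fin d → ℝ))
    (gstar κ : (Fin d → ℝ) → ℝ) (c : ℝ)
    (hAstar : Measurable Astar) (hAstarval : ∀ ω, Astar ω = 0 ∨ Astar ω = 1)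
    (hS : Measurable S) (hSval : ∀ ω, S ω = 0 ∨ S ω = 1)
    (hY : Measurable Y) (hYb : ∃ M, ∀ ω, |Y ω| ≤ M)
    (hX : Measurable X) (hg : Measurable gstar) (hκ : Measurable κ)
    (hCIS : CondIndep (MeasurableSpace.comap X inferInstance)
      (MeasurableSpace.comap (fun ω => (Y ω, Astar ω)) inferInstance)
      (MeasurableSpace.comap S inferInstance)
      hX.comap_le μ)
    (hc : 0 < c) (hc2 : c < 1/2)
    (hglb : ∀ x, c ≤ gstar x) (hgub : ∀ x, gstar x ≤ 1 - c)
    (hκlb : ∀ x, c ≤ κ x) (hκub : ∀ x, κ x ≤ 1)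
    (hgver : (fun ω => gstar (X ω)) =ᵐ[μ] μ[Astar | MeasurableSpace.comap X inferInstance])
    (hκver : (fun ω => κ (X ω)) =ᵐ[μ] μ[S | MeasurableSpace.comap X inferInstance]) :
    ∫ ω, Astar ω * S ω * Y ω / (κ (X ω) * gstar (X ω)) ∂μ
      = ∫ ω, Astar ω * Y ω / gstar (X ω) ∂μ := by
  obtain ⟨M, hM⟩ := hYb
  let m0 : MeasurableSpace Ω := by infer_instance
  set mX := MeasurableSpace.comap X inferInstance with hmXdef
  have hmX : mX ≤ _ := hX.comap_le
  set m₁ := MeasurableSpace.comap (fun ω => (Y ω, Astar ω)) inferInstance with hm₁def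
  have hm₁ : m₁ ≤ _ := (hY.prodMk hAstar).comap_le
  have hm₂ : MeasurableSpace.comap S inferInstance ≤ _ := hS.comap_le
  letI m9 : MeasurableSpace Ω := m0
  haveI : SigmaFinite (μ.trim hmX) := inferInstance
  -- positivity facts
  have hκpos : ∀ x, 0 < κ x := fun x => lt_of_lt_of_le hc (hκlb x)
  have hgpos : ∀ x, 0 < gstar x := fun x => lt_of_lt_of_le hc (hglb x)
  set φ : (Fin d → ℝ) → ℝ := fun x => (κ x * gstar x)⁻¹ with hφdef
  have hφpos : ∀ x, 0 < φ x := fun x => inv_pos.mpr (mul_pos (hκpos x) (hgpos x))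
  have hφb : ∀ x, ‖φ x‖ ≤ (c * c)⁻¹ := by
    intro x
    rw [Real.norm_eq_abs, abs_of_pos (hφpos x)]
    exact inv_anti₀ (mul_pos hc hc)
      (mul_le_mul (hκlb x) (hglb x) hc.le (hκpos x).le)
  have hφmeas : Measurable φ := (hκ.mul hg).inv
  have hSnn : ∀ ω, 0 ≤ S ω := fun ω => by rcases hSval ω with h | h <;> simp [h]
  have hSb : ∀ ω, ‖S ω‖ ≤ 1 := fun ω => by
    rcases hSval ω with h | h <;> simp [h]
  -- measurability wrt sub-σ-algebras
  have hXmX : Measurable[mX] X := fun s hs => ⟨s, hs, rfl⟩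
  have hpair : Measurable[m₁] (fun ω => (Y ω, Astar ω)) := fun s hs => ⟨s, hs, rfl⟩
  have hφX : StronglyMeasurable[mX] (fun ω => φ (X ω)) :=
    ((hφmeas.comp hXmX)).stronglyMeasurable
  have hκX : StronglyMeasurable[mX] (fun ω => κ (X ω)) :=
    ((hκ.comp hXmX)).stronglyMeasurable
  -- integrability of bounded measurable functions
  have intb : ∀ (f : Ω → ℝ), Measurable[m0] f → ∀ C : ℝ, (∀ ω, ‖f ω‖ ≤ C) → Integrable f μ :=
    fun f hf C hC => by
    exact (integrable_const C).mono' hf.aestronglyMeasurable (Filter.Eventually.of_forall hC)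
  -- key: integrate a bounded mX-measurable factor against the conditional expectation
  have key : ∀ (f h : Ω → ℝ), Integrable f μ → StronglyMeasurable[mX] h → ∀ C : ℝ,
      (∀ ω, ‖h ω‖ ≤ C) → ∫ ω, f ω * h ω ∂μ = ∫ ω, (μ[f|mX]) ω * h ω ∂μ := by
    intro f h hf hh C hC
    have h1 : μ[h * f|mX] =ᵐ[μ] h * μ[f|mX] :=
      condExp_stronglyMeasurable_mul_of_bound hmX hh hf C (Filter.Eventually.of_forall hC)
    calc ∫ ω, f ω * h ω ∂μ = ∫ ω, (h * f) ω ∂μ := by simp [mul_comm]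
      _ = ∫ ω, (μ[h * f|mX]) ω ∂μ := (integral_condExp hmX).symm
      _ = ∫ ω, (h * μ[f|mX]) ω ∂μ := integral_congr_ae h1
      _ = ∫ ω, (μ[f|mX]) ω * h ω ∂μ := by simp [mul_comm]
  -- the set B on which S = 1
  set B : Set Ω := S ⁻¹' {1} with hBdef
  have hBmeas : MeasurableSet[m0] B := hS (measurableSet_singleton 1)
  have hB₂ : MeasurableSet[MeasurableSpace.comap S inferInstance] B :=
    ⟨{1}, measurableSet_singleton 1, rfl⟩
  have hSind : S = B.indicator (fun _ => (1 : ℝ)) := by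
    funext ω
    by_cases hω : ω ∈ B
    · have h1 : S ω = 1 := hω
      simp [Set.indicator, hω, h1]
    · have h0 : S ω = 0 := by
        rcases hSval ω with h | h
        · exact h
        · exact absurd h hω
      simp [Set.indicator, hω, h0]
  -- conditional independence product formula
  have hprod := (condIndep_iff mX m₁ (MeasurableSpace.comap S inferInstance) hX.comap_le
    hm₁ hm₂ μ).mp hCIS
  -- the main set identity on m₁-sets
  have hset : ∀ t : Set Ω, MeasurableSet[m₁] t →
      ∫ ω in t, S ω * φ (X ω) ∂μ = ∫ ω in t, (gstar (X ω))⁻¹ ∂μ := by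
    intro t ht
    have htΩ : MeasurableSet[m0] t := hm₁ t ht
    have hind : (fun ω => Set.indicator t (fun _ => (1:ℝ)) ω) =
        t.indicator (fun _ => (1:ℝ)) := rfl
    have hint_ind : ∀ u : Set Ω, MeasurableSet[m0] u →
        Integrable (u.indicator (fun _ => (1:ℝ))) μ := by
      intro u hu
      refine intb _ (measurable_const.indicator hu) 1 fun ω => ?_
      by_cases hω : ω ∈ u <;> simp [Set.indicator, hω]
    rw [← integral_indicator (μ := μ) htΩ, ← integral_indicator (μ := μ) htΩ]
    have e1 : (t.indicator fun ω => S ω * φ (X ω)) =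
        fun ω => (t ∩ B).indicator (fun _ => (1:ℝ)) ω * φ (X ω) := by
      funext ω
      by_cases hωt : ω ∈ t
      · rcases hSval ω with h | h
        · have : ω ∉ B := by simp [hBdef, Set.mem_preimage, h]
          simp [Set.indicator, hωt, this, h]
        · have : ω ∈ B := by simp [hBdef, Set.mem_preimage, h]
          simp [Set.indicator, hωt, this, h]
      · simp [Set.indicator, hωt]
    have e2 : (t.indicator fun ω => (gstar (X ω))⁻¹) =
        fun ω => t.indicator (fun _ => (1:ℝ)) ω * (κ (X ω) * φ (X ω)) := by
      funext ω
      by_cases hωt : ω ∈ t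
      · have h1 : κ (X ω) ≠ 0 := (hκpos _).ne'
        simp only [Set.indicator, hωt, if_pos, one_mul, hφdef]
        rw [mul_inv, ← mul_assoc, mul_inv_cancel₀ h1, one_mul]
      · simp [Set.indicator, hωt]
    rw [e1, e2]
    beta_reduce
    have hκφb : ∀ ω, ‖κ (X ω) * φ (X ω)‖ ≤ 1 * (c*c)⁻¹ := fun ω => by
      rw [norm_mul]
      exact mul_le_mul (by rw [Real.norm_eq_abs, abs_of_pos (hκpos _)]; exact hκub _)
        (hφb _) (norm_nonneg _) zero_le_one
    rw [key ((t ∩ B).indicator fun _ => (1:ℝ)) (fun ω => φ (X ω))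
          (hint_ind _ (htΩ.inter hBmeas)) hφX ((c*c)⁻¹) (fun ω => hφb _),
        key (t.indicator fun _ => (1:ℝ)) (fun ω => κ (X ω) * φ (X ω))
          (hint_ind _ htΩ) (by exact hκX.mul hφX) (1 * (c*c)⁻¹) hκφb]
    -- now use conditional independence and the version of E[S|X]
    have hκB : μ[B.indicator (fun _ => (1:ℝ))|mX] =ᵐ[μ] fun ω => κ (X ω) := by
      rw [← hSind]; exact hκver.symm
    have hp := hprod t B ht hB₂
    refine integral_congr_ae ?_
    filter_upwards [hp, hκB] with ω hpω hκω
    simp only [Pi.mul_apply] at hpω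
    rw [hpω, hκω]
    ring
  -- densities
  set w₁ : Ω → ℝ≥0 := fun ω => (S ω * φ (X ω)).toNNReal with hw₁def
  set w₂ : Ω → ℝ≥0 := fun ω => ((gstar (X ω))⁻¹).toNNReal with hw₂def
  have hw₁meas : Measurable[m0] w₁ := (hS.mul (hφmeas.comp hX)).real_toNNReal
  have hw₂meas : Measurable[m0] w₂ := ((hg.comp hX).inv).real_toNNReal
  -- trims agree
  have hν : (μ.withDensity fun ω => (w₁ ω : ℝ≥0∞)).trim hm₁
      = (μ.withDensity fun ω => (w₂ ω : ℝ≥0∞)).trim hm₁ := by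
    refine @Measure.ext Ω m₁ _ _ fun t ht => ?_
    have htΩ : MeasurableSet[m0] t := hm₁ t ht
    rw [trim_measurableSet_eq hm₁ ht, trim_measurableSet_eq hm₁ ht,
      withDensity_apply _ htΩ, withDensity_apply _ htΩ]
    have hi1 : Integrable (fun ω => S ω * φ (X ω)) (μ.restrict t) := by
      refine (intb _ (hS.mul (hφmeas.comp hX)) ((c*c)⁻¹) fun ω => ?_).restrict
      show ‖S ω * φ (X ω)‖ ≤ (c*c)⁻¹
      rw [norm_mul]
      calc ‖S ω‖ * ‖φ (X ω)‖ ≤ 1 * (c*c)⁻¹ :=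
            mul_le_mul (hSb ω) (hφb _) (norm_nonneg _) zero_le_one
        _ = (c*c)⁻¹ := one_mul _
    have hi2 : Integrable (fun ω => (gstar (X ω))⁻¹) (μ.restrict t) := by
      refine (intb _ ((hg.comp hX).inv) c⁻¹ fun ω => ?_).restrict
      show ‖(gstar (X ω))⁻¹‖ ≤ c⁻¹
      rw [Real.norm_eq_abs, abs_of_pos (inv_pos.mpr (hgpos (X ω)))]
      exact inv_anti₀ hc (hglb (X ω))
    have h1 : ∫⁻ ω in t, (w₁ ω : ℝ≥0∞) ∂μ = ENNReal.ofReal (∫ ω in t, S ω * φ (X ω) ∂μ) := by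
      rw [ofReal_integral_eq_lintegral_ofReal hi1
        (Filter.Eventually.of_forall fun ω => mul_nonneg (hSnn ω) (hφpos _).le)]
      rfl
    have h2 : ∫⁻ ω in t, (w₂ ω : ℝ≥0∞) ∂μ = ENNReal.ofReal (∫ ω in t, (gstar (X ω))⁻¹ ∂μ) := by
      rw [ofReal_integral_eq_lintegral_ofReal hi2
        (Filter.Eventually.of_forall fun ω => (inv_pos.mpr (hgpos _)).le)]
      rfl
    rw [h1, h2, hset t ht]
  -- the function to integrate
  set F : Ω → ℝ := fun ω => Astar ω * Y ω with hFdef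
  have hF : StronglyMeasurable[m₁] F := by
    have : Measurable[m₁] F := (measurable_snd.mul measurable_fst).comp hpair
    exact this.stronglyMeasurable
  calc ∫ ω, Astar ω * S ω * Y ω / (κ (X ω) * gstar (X ω)) ∂μ
      = ∫ ω, (w₁ ω : ℝ) • F ω ∂μ := by
        refine integral_congr_ae (Filter.Eventually.of_forall fun ω => ?_)
        rw [hw₁def]
        simp only [Real.coe_toNNReal _ (mul_nonneg (hSnn ω) (hφpos _).le)]
        simp only [Real.coe_toNNReal _ (mul_nonneg (hSnn ω) (hφpos _).le), smul_eq_mul, hFdef,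
          hφdef, div_eq_mul_inv]
        ring
    _ = ∫ ω, F ω ∂(μ.withDensity fun ω => (w₁ ω : ℝ≥0∞)) := by
        rw [integral_withDensity_eq_integral_smul hw₁meas F]
        simp only [NNReal.smul_def]
    _ = ∫ ω, F ω ∂((μ.withDensity fun ω => (w₁ ω : ℝ≥0∞)).trim hm₁) := integral_trim hm₁ hF
    _ = ∫ ω, F ω ∂((μ.withDensity fun ω => (w₂ ω : ℝ≥0∞)).trim hm₁) := by rw [hν]
    _ = ∫ ω, F ω ∂(μ.withDensity fun ω => (w₂ ω : ℝ≥0∞)) := (integral_trim hm₁ hF).symm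
    _ = ∫ ω, (w₂ ω : ℝ) • F ω ∂μ := by
        rw [integral_withDensity_eq_integral_smul hw₂meas F]
        simp only [NNReal.smul_def]
    _ = ∫ ω, Astar ω * Y ω / gstar (X ω) ∂μ := by
        refine integral_congr_ae (Filter.Eventually.of_forall fun ω => ?_)
        rw [hw₂def]
        simp only [Real.coe_toNNReal _ (inv_pos.mpr (hgpos _)).le, smul_eq_mul, hFdef,
          div_eq_mul_inv]
        ring
end

section
/- Let (Ω, 𝓕, μ) be a standard Borel probability space. Let A : Ω → ℝ take values in {0,1}, let Y₁, Y₀ be bounded real-valued random variables, set Y = A·Y₁ + (1 − A)·Y₀, let X : Ω → ℝ^d be measurable, and suppose the pair (Y₁, Y₀) is conditionally independent of A given σ(X). Let g : ℝ^d → ℝ be measurable with c ≤ g(x) ≤ 1 − c for all x, for some 0 < c < 1/2, such that g ∘ X is a version of E[A | σ(X)]. Then E[(A/g(X) − (1 − A)/(1 − g(X)))·Y] = E[Y₁ − Y₀]. (Inverse-probability-weighting identification of the average treatment effect contrast.) -/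
open MeasureTheory ProbabilityTheory

section Aux

lemma ipw_integrable_of_bound {Ω : Type*} {mΩ : MeasurableSpace Ω}
    (μ : Measure Ω) [IsProbabilityMeasure μ]
    {f : Ω → ℝ} (hf : Measurable[mΩ] f) (M : ℝ) (h : ∀ ω, |f ω| ≤ M) : Integrable f μ :=
  (integrable_const M).mono' hf.aestronglyMeasurable
    (Filter.Eventually.of_forall fun ω => by simpa [Real.norm_eq_abs] using h ω)

lemma ipw_aux_s15 {Ω : Type*} {m m₂ : MeasurableSpace Ω} {mΩ : MeasurableSpace Ω}
    (μ : Measure Ω) [IsProbabilityMeasure μ]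
    (hm : m ≤ mΩ) (hm₂ : m₂ ≤ mΩ)
    {B : Ω → ℝ} (hB : Measurable[mΩ] B) (hBval : ∀ ω, B ω = 0 ∨ B ω = 1)
    {h : Ω → ℝ} (hh : Measurable[m] h) {c : ℝ} (hc : 0 < c)
    (hlb : ∀ ω, c ≤ h ω) (hub : ∀ ω, h ω ≤ 1)
    (hprod : ∀ r, MeasurableSet[m₂] r →
      (μ[Set.indicator (B ⁻¹' {1} ∩ r) (fun _ => (1:ℝ)) | m]) =ᵐ[μ]
        (μ[Set.indicator (B ⁻¹' {1}) (fun _ => (1:ℝ)) | m])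
          * (μ[Set.indicator r (fun _ => (1:ℝ)) | m]))
    (hver : h =ᵐ[μ] μ[B | m])
    {W : Ω → ℝ} (hW : Measurable[m₂] W) {M : ℝ} (hWb : ∀ ω, |W ω| ≤ M) :
    ∫ ω, B ω * W ω / h ω ∂μ = ∫ ω, W ω ∂μ := by
  set s : Set Ω := B ⁻¹' {1} with hs_def
  have hmm : m ⊔ m₂ ≤ mΩ := sup_le hm hm₂
  have hBind : B = Set.indicator s (fun _ => (1:ℝ)) := by
    funext ω
    rcases hBval ω with h0 | h1
    · have hωs : ω ∉ s := by simp [hs_def, Set.mem_preimage, h0]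
      simp [Set.indicator_of_notMem hωs, h0]
    · have hωs : ω ∈ s := by simp [hs_def, Set.mem_preimage, h1]
      simp [Set.indicator_of_mem hωs, h1]
  have hs_meas : MeasurableSet[mΩ] s := hB (measurableSet_singleton 1)
  have hB1 : ∀ ω, |B ω| ≤ 1 := fun ω => by rcases hBval ω with h0 | h0 <;> simp [h0]
  have hBint : Integrable B μ := ipw_integrable_of_bound μ hB 1 hB1
  have hhm : Measurable[mΩ] h := hh.mono hm le_rfl
  have hpos : ∀ ω, 0 < h ω := fun ω => lt_of_lt_of_le hc (hlb ω)
  have hne : ∀ ω, h ω ≠ 0 := fun ω => (hpos ω).ne'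
  have hh1 : ∀ ω, |h ω| ≤ 1 := fun ω => by rw [abs_of_pos (hpos ω)]; exact hub ω
  have h_hint : Integrable h μ := ipw_integrable_of_bound μ hhm 1 hh1
  have hWm : Measurable[mΩ] W := hW.mono hm₂ le_rfl
  haveI : Nonempty Ω := by
    by_contra hne
    rw [not_nonempty_iff] at hne
    have h1 : μ Set.univ = 1 := measure_univ
    rw [Set.univ_eq_empty_iff.mpr hne, measure_empty] at h1
    exact zero_ne_one h1
  have hM0 : 0 ≤ M := le_trans (abs_nonneg _) (hWb (Classical.arbitrary Ω))
  have hWint : Integrable W μ := ipw_integrable_of_bound μ hWm M hWb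
  -- the generating π-system of m ⊔ m₂
  set C : Set (Set Ω) :=
    Set.image2 (· ∩ ·) {u | MeasurableSet[m] u} {r | MeasurableSet[m₂] r} with hC_def
  have h_eq : (m ⊔ m₂ : MeasurableSpace Ω) = MeasurableSpace.generateFrom C := by
    refine le_antisymm (sup_le ?_ ?_) (MeasurableSpace.generateFrom_le ?_)
    · intro u hu
      exact MeasurableSpace.measurableSet_generateFrom
        ⟨u, hu, Set.univ, (@MeasurableSet.univ _ m₂), Set.inter_univ u⟩
    · intro r hr
      exact MeasurableSpace.measurableSet_generateFrom
        ⟨Set.univ, (@MeasurableSet.univ _ m), r, hr, Set.univ_inter r⟩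
    · rintro t ⟨u, hu, r, hr, rfl⟩
      exact ((le_sup_left : m ≤ m ⊔ m₂) u hu).inter ((le_sup_right : m₂ ≤ m ⊔ m₂) r hr)
  have h_pi : IsPiSystem C := by
    rintro t1 ⟨u1, hu1, r1, hr1, rfl⟩ t2 ⟨u2, hu2, r2, hr2, rfl⟩ -
    exact ⟨u1 ∩ u2, hu1.inter hu2, r1 ∩ r2, hr1.inter hr2, (Set.inter_inter_inter_comm u1 r1 u2 r2).symm⟩
  -- the basic set-integral identity on the π-system
  have hbasic : ∀ t ∈ C, ∫ x in t, B x ∂μ = ∫ x in t, h x ∂μ := by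
    rintro t ⟨u, hu, r, hr, rfl⟩
    have hu' : MeasurableSet[mΩ] u := hm u hu
    have hr' : MeasurableSet[mΩ] r := hm₂ r hr
    have hind_int : Integrable (Set.indicator (s ∩ r) (fun _ => (1:ℝ))) μ := by
      refine ipw_integrable_of_bound μ (measurable_const.indicator (hs_meas.inter hr')) 1
        fun ω => ?_
      by_cases hω : ω ∈ s ∩ r <;> simp [hω]
    have hr_int : Integrable (Set.indicator r (fun _ => (1:ℝ))) μ := by
      refine ipw_integrable_of_bound μ (measurable_const.indicator hr') 1 fun ω => ?_
      by_cases hω : ω ∈ r <;> simp [hω]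
    have hmul_int : Integrable (h * Set.indicator r (fun _ => (1:ℝ))) μ := by
      refine ipw_integrable_of_bound μ (hhm.mul (measurable_const.indicator hr')) 1 fun ω => ?_
      by_cases hω : ω ∈ r <;>
        simp [Pi.mul_apply, hω, abs_mul, abs_of_pos (hpos ω), hub ω, (hpos ω).le]
    have he : (μ[Set.indicator s (fun _ => (1:ℝ)) | m]) =ᵐ[μ] h := by
      rw [← hBind]; exact hver.symm
    calc ∫ x in u ∩ r, B x ∂μ
        = ∫ x in u, Set.indicator r B x ∂μ := (setIntegral_indicator hr').symm
      _ = ∫ x in u, Set.indicator (s ∩ r) (fun _ => (1:ℝ)) x ∂μ := by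
          simp only [hBind, Set.indicator_indicator, Set.inter_comm r s]
      _ = ∫ x in u, (μ[Set.indicator (s ∩ r) (fun _ => (1:ℝ)) | m]) x ∂μ :=
          (setIntegral_condExp hm hind_int hu).symm
      _ = ∫ x in u, ((μ[Set.indicator s (fun _ => (1:ℝ)) | m])
            * (μ[Set.indicator r (fun _ => (1:ℝ)) | m])) x ∂μ :=
          setIntegral_congr_ae hu' ((hprod r hr).mono fun x hx _ => hx)
      _ = ∫ x in u, (h * (μ[Set.indicator r (fun _ => (1:ℝ)) | m])) x ∂μ := by
          refine setIntegral_congr_ae hu' ?_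
          filter_upwards [he] with x hx _
          simp [Pi.mul_apply, hx]
      _ = ∫ x in u, (μ[h * Set.indicator r (fun _ => (1:ℝ)) | m]) x ∂μ := by
          refine (setIntegral_congr_ae hu' ?_).symm
          filter_upwards [condExp_mul_of_stronglyMeasurable_left hh.stronglyMeasurable hmul_int hr_int]
            with x hx _
          exact hx
      _ = ∫ x in u, (h * Set.indicator r (fun _ => (1:ℝ))) x ∂μ :=
          setIntegral_condExp hm hmul_int hu
      _ = ∫ x in u, Set.indicator r h x ∂μ := by
          refine setIntegral_congr_ae hu' (Filter.Eventually.of_forall fun x _ => ?_)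
          by_cases hx : x ∈ r <;> simp [Pi.mul_apply, hx]
      _ = ∫ x in u ∩ r, h x ∂μ := setIntegral_indicator hr'
  have htotal : ∫ x, B x ∂μ = ∫ x, h x ∂μ := by
    have := hbasic Set.univ
      ⟨Set.univ, (@MeasurableSet.univ _ m), Set.univ, (@MeasurableSet.univ _ m₂), by simp⟩
    simpa [Measure.restrict_univ] using this
  have hset : ∀ t, MeasurableSet[m ⊔ m₂] t → ∫ x in t, B x ∂μ = ∫ x in t, h x ∂μ := by
    intro t ht
    refine MeasurableSpace.induction_on_inter (m := m ⊔ m₂)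
      (C := fun t _ => ∫ x in t, B x ∂μ = ∫ x in t, h x ∂μ) h_eq h_pi ?_ hbasic ?_ ?_ t ht
    · simp
    · intro t ht hPt
      have ht' : MeasurableSet[mΩ] t := hmm t ht
      have h1 := integral_add_compl ht' hBint
      have h2 := integral_add_compl ht' h_hint
      linarith
    · intro f hdisj hfm hPf
      rw [integral_iUnion (fun i => hmm _ (hfm i)) hdisj hBint.integrableOn,
        integral_iUnion (fun i => hmm _ (hfm i)) hdisj h_hint.integrableOn]
      exact tsum_congr hPf
  haveI : SigmaFinite (μ.trim hmm) := by
    haveI : IsFiniteMeasure (μ.trim hmm) := isFiniteMeasure_trim hmm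
    infer_instance
  have key : h =ᵐ[μ] μ[B | m ⊔ m₂] := by
    refine ae_eq_condExp_of_forall_setIntegral_eq hmm hBint
      (fun t _ _ => h_hint.integrableOn) (fun t ht _ => (hset t ht).symm) ?_
    exact (StronglyMeasurable.aestronglyMeasurable (m := m ⊔ m₂)
      ((hh.mono (le_sup_left : m ≤ m ⊔ m₂) le_rfl).stronglyMeasurable))
  -- conclude
  have hWh_sm : StronglyMeasurable[m ⊔ m₂] (fun ω => W ω / h ω) :=
    ((hW.mono le_sup_right le_rfl).div (hh.mono le_sup_left le_rfl)).stronglyMeasurable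
  have hint_prod : Integrable ((fun ω => W ω / h ω) * B) μ := by
    refine ipw_integrable_of_bound μ ((hWm.div hhm).mul hB) (M / c) fun ω => ?_
    have h1 : |W ω / h ω| ≤ M / c := by
      rw [abs_div, abs_of_pos (hpos ω)]
      exact div_le_div₀ hM0 (hWb ω) hc (hlb ω)
    calc |(fun ω => W ω / h ω) ω * B ω| = |W ω / h ω| * |B ω| := abs_mul _ _
      _ ≤ (M / c) * 1 := mul_le_mul h1 (hB1 ω) (abs_nonneg _) (div_nonneg hM0 hc.le)
      _ = M / c := mul_one _
  calc ∫ ω, B ω * W ω / h ω ∂μ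
      = ∫ ω, ((fun ω => W ω / h ω) * B) ω ∂μ :=
        integral_congr_ae (Filter.Eventually.of_forall fun ω => by
          simp only [Pi.mul_apply]; ring)
    _ = ∫ ω, (μ[(fun ω => W ω / h ω) * B | m ⊔ m₂]) ω ∂μ := (integral_condExp hmm).symm
    _ = ∫ ω, W ω ∂μ := by
        refine integral_congr_ae ?_
        filter_upwards [condExp_mul_of_stronglyMeasurable_left hWh_sm hint_prod hBint, key]
          with ω h1ω h2ω
        rw [h1ω, Pi.mul_apply, ← h2ω]
        exact div_mul_cancel₀ (W ω) (hne ω)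

end Aux

/-- Inverse-probability-weighting identification of the average treatment effect contrast:
E[(A/g(X) − (1 − A)/(1 − g(X)))·Y] = E[Y₁ − Y₀]. -/
theorem ipw_ate_identification
    {Ω : Type*} [MeasurableSpace Ω] [StandardBorelSpace Ω]
    (μ : Measure Ω) [IsProbabilityMeasure μ]
    {d : ℕ} (A Y Y₁ Y₀ : Ω → ℝ) (X : Ω → (Fin d → ℝ)) (g : (Fin d → ℝ) → ℝ) (c : ℝ)
    (hA : Measurable A) (hAval : ∀ ω, A ω = 0 ∨ A ω = 1)
    (hY₁ : Measurable Y₁) (hY₀ : Measurable Y₀)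
    (hY₁b : ∃ M, ∀ ω, |Y₁ ω| ≤ M) (hY₀b : ∃ M, ∀ ω, |Y₀ ω| ≤ M)
    (hYdef : ∀ ω, Y ω = A ω * Y₁ ω + (1 - A ω) * Y₀ ω)
    (hX : Measurable X) (hg : Measurable g)
    (hCI : CondIndep (MeasurableSpace.comap X inferInstance)
      (MeasurableSpace.comap (fun ω => (Y₁ ω, Y₀ ω)) inferInstance)
      (MeasurableSpace.comap A inferInstance)
      hX.comap_le μ)
    (hc : 0 < c) (hc2 : c < 1/2) (hglb : ∀ x, c ≤ g x) (hgub : ∀ x, g x ≤ 1 - c)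
    (hgver : (fun ω => g (X ω)) =ᵐ[μ] μ[A | MeasurableSpace.comap X inferInstance]) :
    ∫ ω, (A ω / g (X ω) - (1 - A ω) / (1 - g (X ω))) * Y ω ∂μ
      = ∫ ω, Y₁ ω - Y₀ ω ∂μ := by
  obtain ⟨M₁, hM₁⟩ := hY₁b
  obtain ⟨M₀, hM₀⟩ := hY₀b
  have hpair : Measurable (fun ω => (Y₁ ω, Y₀ ω)) := hY₁.prodMk hY₀
  have hA' : Measurable (fun ω => 1 - A ω) := measurable_const.sub hA
  have hAint : Integrable A μ :=
    ipw_integrable_of_bound μ hA 1 fun ω => by rcases hAval ω with h0 | h0 <;> simp [h0]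
  have hgXamb : Measurable (fun ω => g (X ω)) := hg.comp hX
  have hm : MeasurableSpace.comap X inferInstance ≤ ‹MeasurableSpace Ω› := hX.comap_le
  have hm₂ : MeasurableSpace.comap (fun ω => (Y₁ ω, Y₀ ω)) inferInstance
      ≤ ‹MeasurableSpace Ω› := hpair.comap_le
  have hXm : Measurable[MeasurableSpace.comap X inferInstance] X :=
    Measurable.of_comap_le le_rfl
  have hpairm : Measurable[MeasurableSpace.comap (fun ω => (Y₁ ω, Y₀ ω)) inferInstance]
      (fun ω => (Y₁ ω, Y₀ ω)) := Measurable.of_comap_le le_rfl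
  have hY₁m : Measurable[MeasurableSpace.comap (fun ω => (Y₁ ω, Y₀ ω)) inferInstance] Y₁ :=
    measurable_fst.comp hpairm
  have hY₀m : Measurable[MeasurableSpace.comap (fun ω => (Y₁ ω, Y₀ ω)) inferInstance] Y₀ :=
    measurable_snd.comp hpairm
  have hgXm : Measurable[MeasurableSpace.comap X inferInstance] (fun ω => g (X ω)) :=
    hg.comp hXm
  -- product rule from conditional independence
  have hCI' := (condIndep_iff (MeasurableSpace.comap X inferInstance)
    (MeasurableSpace.comap (fun ω => (Y₁ ω, Y₀ ω)) inferInstance)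
    (MeasurableSpace.comap A inferInstance) hm hm₂ hA.comap_le μ).mp hCI
  have hprod : ∀ sA : Set ℝ, MeasurableSet sA →
      ∀ r, MeasurableSet[MeasurableSpace.comap (fun ω => (Y₁ ω, Y₀ ω)) inferInstance] r →
      (μ[Set.indicator (A ⁻¹' sA ∩ r) (fun _ => (1:ℝ)) | MeasurableSpace.comap X inferInstance])
        =ᵐ[μ]
        (μ[Set.indicator (A ⁻¹' sA) (fun _ => (1:ℝ)) | MeasurableSpace.comap X inferInstance])
          * (μ[Set.indicator r (fun _ => (1:ℝ)) | MeasurableSpace.comap X inferInstance]) := by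
    intro sA hsA r hr
    have h1 := hCI' r (A ⁻¹' sA) hr ⟨sA, hsA, rfl⟩
    have h2 : r ∩ A ⁻¹' sA = A ⁻¹' sA ∩ r := Set.inter_comm _ _
    rw [h2] at h1
    refine h1.trans (Filter.Eventually.of_forall fun ω => ?_)
    simp [Pi.mul_apply, mul_comm]
  -- first term
  have hglbX₁ : ∀ ω, c ≤ g (X ω) := fun ω => hglb (X ω)
  have hubX₁ : ∀ ω, g (X ω) ≤ 1 := fun ω => le_trans (hgub (X ω)) (by linarith)
  have I₁ : ∫ ω, A ω * Y₁ ω / g (X ω) ∂μ = ∫ ω, Y₁ ω ∂μ :=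
    ipw_aux_s15 μ hm hm₂ hA hAval hgXm hc hglbX₁ hubX₁
      (fun r hr => hprod {1} (measurableSet_singleton 1) r hr) hgver hY₁m hM₁
  -- second term
  have hA'val : ∀ ω, (1 - A ω) = 0 ∨ (1 - A ω) = 1 := fun ω => by
    rcases hAval ω with h0 | h0 <;> simp [h0]
  have hpre : (fun ω => 1 - A ω) ⁻¹' {1} = A ⁻¹' {0} := by
    ext ω; simp [Set.mem_preimage, sub_eq_self]
  have hprod₂ : ∀ r, MeasurableSet[MeasurableSpace.comap (fun ω => (Y₁ ω, Y₀ ω)) inferInstance] r →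
      (μ[Set.indicator ((fun ω => 1 - A ω) ⁻¹' {1} ∩ r) (fun _ => (1:ℝ)) |
          MeasurableSpace.comap X inferInstance]) =ᵐ[μ]
        (μ[Set.indicator ((fun ω => 1 - A ω) ⁻¹' {1}) (fun _ => (1:ℝ)) |
          MeasurableSpace.comap X inferInstance])
          * (μ[Set.indicator r (fun _ => (1:ℝ)) | MeasurableSpace.comap X inferInstance]) := by
    intro r hr
    rw [hpre]
    exact hprod {0} (measurableSet_singleton 0) r hr
  have hver₂ : (fun ω => 1 - g (X ω)) =ᵐ[μ] μ[(fun ω => 1 - A ω) |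
      MeasurableSpace.comap X inferInstance] := by
    have hfun : (fun ω => 1 - A ω) = (fun _ => (1:ℝ)) - A := rfl
    have hsub := condExp_sub (μ := μ) (m := MeasurableSpace.comap X inferInstance)
      (integrable_const (1:ℝ)) hAint
    have hc1 : μ[(fun _ => (1:ℝ)) | MeasurableSpace.comap X inferInstance]
        = fun _ => (1:ℝ) := condExp_const hm 1
    rw [hfun]
    filter_upwards [hsub, hgver] with ω h1 h2
    rw [h1, Pi.sub_apply, hc1, ← h2]
  have hglbX₂ : ∀ ω, c ≤ 1 - g (X ω) := fun ω => by linarith [hgub (X ω)]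
  have hubX₂ : ∀ ω, 1 - g (X ω) ≤ 1 := fun ω => by linarith [hglb (X ω), hc]
  have hgXm₂ : Measurable[MeasurableSpace.comap X inferInstance] (fun ω => 1 - g (X ω)) :=
    hgXm.const_sub 1
  have I₂ : ∫ ω, (1 - A ω) * Y₀ ω / (1 - g (X ω)) ∂μ = ∫ ω, Y₀ ω ∂μ :=
    ipw_aux_s15 μ hm hm₂ hA' hA'val hgXm₂ hc hglbX₂ hubX₂ hprod₂ hver₂ hY₀m hM₀
  -- assemble
  have bound3 : ∀ (a b hv Mv : ℝ), |a| ≤ 1 → |b| ≤ Mv → c ≤ hv → |a * b / hv| ≤ Mv / c := by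
    intro a b hv Mv ha hb hvc
    have hvpos : 0 < hv := lt_of_lt_of_le hc hvc
    rw [abs_div, abs_mul, abs_of_pos hvpos]
    refine div_le_div₀ (le_trans (abs_nonneg _) hb) ?_ hc hvc
    calc |a| * |b| ≤ 1 * |b| := mul_le_mul_of_nonneg_right ha (abs_nonneg _)
      _ = |b| := one_mul _
      _ ≤ Mv := hb
  have hA1 : ∀ ω, |A ω| ≤ 1 := fun ω => by rcases hAval ω with h0 | h0 <;> simp [h0]
  have hA'1 : ∀ ω, |1 - A ω| ≤ 1 := fun ω => by rcases hAval ω with h0 | h0 <;> simp [h0]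
  have int1 : Integrable (fun ω => A ω * Y₁ ω / g (X ω)) μ :=
    ipw_integrable_of_bound μ ((hA.mul hY₁).div hgXamb) (M₁ / c)
      fun ω => bound3 _ _ _ _ (hA1 ω) (hM₁ ω) (hglbX₁ ω)
  have int2 : Integrable (fun ω => (1 - A ω) * Y₀ ω / (1 - g (X ω))) μ :=
    ipw_integrable_of_bound μ ((hA'.mul hY₀).div (measurable_const.sub hgXamb)) (M₀ / c)
      fun ω => bound3 _ _ _ _ (hA'1 ω) (hM₀ ω) (hglbX₂ ω)
  have hY₁int : Integrable Y₁ μ := ipw_integrable_of_bound μ hY₁ M₁ hM₁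
  have hY₀int : Integrable Y₀ μ := ipw_integrable_of_bound μ hY₀ M₀ hM₀
  have e : ∀ ω, (A ω / g (X ω) - (1 - A ω) / (1 - g (X ω))) * Y ω
      = A ω * Y₁ ω / g (X ω) - (1 - A ω) * Y₀ ω / (1 - g (X ω)) := by
    intro ω
    rw [hYdef ω]
    rcases hAval ω with h0 | h0 <;> rw [h0] <;> ring
  calc ∫ ω, (A ω / g (X ω) - (1 - A ω) / (1 - g (X ω))) * Y ω ∂μ
      = ∫ ω, (A ω * Y₁ ω / g (X ω) - (1 - A ω) * Y₀ ω / (1 - g (X ω))) ∂μ :=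
        integral_congr_ae (Filter.Eventually.of_forall e)
    _ = (∫ ω, A ω * Y₁ ω / g (X ω) ∂μ) - ∫ ω, (1 - A ω) * Y₀ ω / (1 - g (X ω)) ∂μ :=
        integral_sub int1 int2
    _ = (∫ ω, Y₁ ω ∂μ) - ∫ ω, Y₀ ω ∂μ := by rw [I₁, I₂]
    _ = ∫ ω, Y₁ ω - Y₀ ω ∂μ := (integral_sub hY₁int hY₀int).symm
end

section
/- Let (Ω, 𝓕, μ) be a standard Borel probability space. Let A, S : Ω → ℝ take values in {0,1}, let Y₁, Y₀ be bounded real-valued random variables, set Y = A·Y₁ + (1 − A)·Y₀, let X : Ω → ℝ^d and A* : Ω → ℝ be measurable, and write Z = (X, A*, Y) : Ω → ℝ^{d+2}. Suppose Y₁ is conditionally independent of A given σ(X), and A is conditionally independent of S given σ(Z) (outcome-dependent validation sampling). Let g : ℝ^d → ℝ and κ : ℝ^{d+2} → ℝ be measurable with c ≤ g(x) ≤ 1 − c and c ≤ κ(z) ≤ 1 for all x, z, for some 0 < c < 1/2, such that g ∘ X is a version of E[A | σ(X)] and κ ∘ Z is a version of E[S | σ(Z)]. Then E[(S/κ(Z))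 · (A·Y / g(X))] = E[Y₁]. (The population identification underlying the IPSW estimator τ̂_val^{IPSW} of Theorem 2, part 1.) -/
open MeasureTheory ProbabilityTheory

lemma my_integral_indicator {Ω : Type*} {mΩ : MeasurableSpace Ω} (μ : Measure Ω) {s : Set Ω}
    (hs : MeasurableSet[mΩ] s) (f : Ω → ℝ) :
    ∫ x, s.indicator f x ∂μ = ∫ x in s, f x ∂μ := integral_indicator hs

lemma my_integrable_indicator_one {Ω : Type*} {mΩ : MeasurableSpace Ω} {μ : Measure Ω}
    [IsProbabilityMeasure μ] {s : Set Ω} (hs : MeasurableSet[mΩ] s) :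
    Integrable (s.indicator fun _ => (1 : ℝ)) μ := (integrable_const 1).indicator hs

lemma my_integrableOn {Ω : Type*} {mΩ : MeasurableSpace Ω} {μ : Measure Ω} {f : Ω → ℝ}
    (hf : Integrable f μ) (s : Set Ω) : IntegrableOn f s μ := hf.integrableOn

lemma integrable_of_abs_le' {Ω : Type*} {mΩ : MeasurableSpace Ω} {μ : Measure Ω}
    [IsProbabilityMeasure μ] {f : Ω → ℝ} (hf : Measurable[mΩ] f) {M : ℝ}
    (hb : ∀ ω, |f ω| ≤ M) : Integrable f μ :=
  Integrable.mono' (integrable_const M) hf.aestronglyMeasurable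
    (Filter.Eventually.of_forall fun ω => by simpa [Real.norm_eq_abs] using hb ω)

lemma core_switch {Ω : Type*} [mΩ : MeasurableSpace Ω] [StandardBorelSpace Ω]
    (μ : Measure Ω) [IsProbabilityMeasure μ]
    {m : MeasurableSpace Ω} (hm : m ≤ mΩ)
    (U V h v : Ω → ℝ) (hU : Measurable[mΩ] U) (hV : Measurable[mΩ] V)
    (hVval : ∀ ω, V ω = 0 ∨ V ω = 1)
    {MU Mh Mv : ℝ} (hUb : ∀ ω, |U ω| ≤ MU) (hhb : ∀ ω, |h ω| ≤ Mh) (hvb : ∀ ω, |v ω| ≤ Mv)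
    (hh : Measurable[m] h) (hv : Measurable[m] v)
    (hCI : CondIndep m (MeasurableSpace.comap U inferInstance)
      (MeasurableSpace.comap V inferInstance) hm μ)
    (hver : v =ᵐ[μ] μ[V | m]) :
    ∫ ω, U ω * (V ω * h ω) ∂μ = ∫ ω, U ω * (v ω * h ω) ∂μ := by
  have hhΩ : Measurable[mΩ] h := hh.mono hm le_rfl
  have hvΩ : Measurable[mΩ] v := hv.mono hm le_rfl
  have hmU : MeasurableSpace.comap U inferInstance ≤ mΩ := hU.comap_le
  have ht2 : MeasurableSet[mΩ] (V ⁻¹' {1}) := hV (measurableSet_singleton 1)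
  have hVind : V = (V ⁻¹' {1}).indicator (fun _ => (1 : ℝ)) := by
    funext ω
    rcases hVval ω with h0 | h1
    · rw [Set.indicator_of_notMem (by simp [h0])]
      exact h0
    · rw [Set.indicator_of_mem (by simp [h1])]
      exact h1
  have hw₁ : Integrable (fun ω => V ω * h ω) μ := by
    refine integrable_of_abs_le' (hV.mul hhΩ) (M := 1 * |Mh|) fun ω => ?_
    rw [abs_mul]
    exact mul_le_mul (by rcases hVval ω with h0 | h1 <;> rw [‹V ω = _›] <;> norm_num)
      ((hhb ω).trans (le_abs_self _)) (abs_nonneg _) zero_le_one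
  have hw₂ : Integrable (fun ω => v ω * h ω) μ := by
    refine integrable_of_abs_le' (hvΩ.mul hhΩ) (M := |Mv| * |Mh|) fun ω => ?_
    rw [abs_mul]
    exact mul_le_mul ((hvb ω).trans (le_abs_self _)) ((hhb ω).trans (le_abs_self _))
      (abs_nonneg _) (abs_nonneg _)
  -- the key set-integral identity
  have hKey : ∀ s : Set Ω, MeasurableSet[MeasurableSpace.comap U inferInstance] s →
      ∫ ω in s, V ω * h ω ∂μ = ∫ ω in s, v ω * h ω ∂μ := by
    intro s hs
    have hsΩ : MeasurableSet[mΩ] s := hmU s hs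
    have hprod := (condIndep_iff m (MeasurableSpace.comap U inferInstance)
      (MeasurableSpace.comap V inferInstance) hm hU.comap_le hV.comap_le μ).mp hCI s (V ⁻¹' {1})
      hs ⟨{1}, measurableSet_singleton 1, rfl⟩
    have hst2 : MeasurableSet[mΩ] (s ∩ V ⁻¹' {1}) := hsΩ.inter ht2
    have hIst : Integrable ((s ∩ V ⁻¹' {1}).indicator (fun _ => (1 : ℝ))) μ :=
      my_integrable_indicator_one hst2
    have hIs : Integrable (s.indicator (fun _ => (1 : ℝ))) μ :=
      my_integrable_indicator_one hsΩ
    have hbound_h : ∀ᵐ ω ∂μ, ‖h ω‖ ≤ Mh :=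
      Filter.Eventually.of_forall fun ω => by simpa [Real.norm_eq_abs] using hhb ω
    have hhv : Measurable[m] (fun ω => h ω * v ω) := hh.mul hv
    have hbound_hv : ∀ᵐ ω ∂μ, ‖h ω * v ω‖ ≤ |Mh| * |Mv| :=
      Filter.Eventually.of_forall fun ω => by
        rw [Real.norm_eq_abs, abs_mul]
        exact mul_le_mul ((hhb ω).trans (le_abs_self _)) ((hvb ω).trans (le_abs_self _))
          (abs_nonneg _) (abs_nonneg _)
    calc ∫ ω in s, V ω * h ω ∂μ
        = ∫ ω, h ω * (s ∩ V ⁻¹' {1}).indicator (fun _ => (1 : ℝ)) ω ∂μ := by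
          rw [← my_integral_indicator μ hsΩ]
          congr 1
          funext ω
          by_cases hωs : ω ∈ s
          · rw [Set.indicator_of_mem hωs]
            by_cases hωt : ω ∈ V ⁻¹' {1}
            · rw [Set.indicator_of_mem (Set.mem_inter hωs hωt)]
              have hV1 : V ω = 1 := hωt
              rw [hV1]; ring
            · rw [Set.indicator_of_notMem (fun hmem => hωt hmem.2)]
              have hV0 : V ω = 0 := by
                rcases hVval ω with h0 | h1
                · exact h0
                · exact absurd h1 hωt
              rw [hV0]; ring
          · rw [Set.indicator_of_notMem hωs,
              Set.indicator_of_notMem (fun hmem => hωs hmem.1)]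
            ring
      _ = ∫ ω, (μ[(fun ω => h ω * (s ∩ V ⁻¹' {1}).indicator (fun _ => (1 : ℝ)) ω) | m]) ω ∂μ :=
          (integral_condExp hm).symm
      _ = ∫ ω, h ω * (μ[(s ∩ V ⁻¹' {1}).indicator (fun _ => (1 : ℝ)) | m]) ω ∂μ := by
          refine integral_congr_ae ?_
          exact condExp_stronglyMeasurable_mul_of_bound hm hh.stronglyMeasurable hIst Mh hbound_h
      _ = ∫ ω, h ω * ((μ⟦s | m⟧) ω * (μ⟦V ⁻¹' {1} | m⟧) ω) ∂μ := by
          refine integral_congr_ae ?_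
          filter_upwards [hprod] with ω hω
          rw [hω]; rfl
      _ = ∫ ω, (h ω * v ω) * (μ⟦s | m⟧) ω ∂μ := by
          refine integral_congr_ae ?_
          have hVv : (μ⟦V ⁻¹' {1} | m⟧) =ᵐ[μ] v := by
            rw [← hVind]; exact hver.symm
          filter_upwards [hVv] with ω hω
          rw [hω]; ring
      _ = ∫ ω, (μ[(fun ω => (h ω * v ω) * s.indicator (fun _ => (1 : ℝ)) ω) | m]) ω ∂μ := by
          refine (integral_congr_ae ?_).symm
          exact condExp_stronglyMeasurable_mul_of_bound hm hhv.stronglyMeasurable hIs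
            (|Mh| * |Mv|) hbound_hv
      _ = ∫ ω, (h ω * v ω) * s.indicator (fun _ => (1 : ℝ)) ω ∂μ := integral_condExp hm
      _ = ∫ ω in s, v ω * h ω ∂μ := by
          rw [← my_integral_indicator μ hsΩ]
          congr 1
          funext ω
          by_cases hωs : ω ∈ s
          · rw [Set.indicator_of_mem hωs, Set.indicator_of_mem hωs]; ring
          · rw [Set.indicator_of_notMem hωs, Set.indicator_of_notMem hωs]; ring
  -- condexp uniqueness
  have hcond : (μ[(fun ω => v ω * h ω) | MeasurableSpace.comap U inferInstance])
      =ᵐ[μ] (μ[(fun ω => V ω * h ω) | MeasurableSpace.comap U inferInstance]) := by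
    refine ae_eq_condExp_of_forall_setIntegral_eq hmU hw₁
      (fun s _ _ => my_integrableOn integrable_condExp s)
      (fun s hs _ => ?_)
      (StronglyMeasurable.aestronglyMeasurable stronglyMeasurable_condExp)
    rw [setIntegral_condExp hmU hw₂ hs]
    exact (hKey s hs).symm
  have hUsm : StronglyMeasurable[MeasurableSpace.comap U inferInstance] U :=
    (comap_measurable U).stronglyMeasurable
  have hboundU : ∀ᵐ ω ∂μ, ‖U ω‖ ≤ MU :=
    Filter.Eventually.of_forall fun ω => by simpa [Real.norm_eq_abs] using hUb ω
  calc ∫ ω, U ω * (V ω * h ω) ∂μ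
      = ∫ ω, (μ[(fun ω => U ω * (V ω * h ω)) | MeasurableSpace.comap U inferInstance]) ω ∂μ :=
        (integral_condExp hmU).symm
    _ = ∫ ω, U ω * (μ[(fun ω => V ω * h ω) | MeasurableSpace.comap U inferInstance]) ω ∂μ := by
        refine integral_congr_ae ?_
        exact condExp_stronglyMeasurable_mul_of_bound hmU hUsm hw₁ MU hboundU
    _ = ∫ ω, U ω * (μ[(fun ω => v ω * h ω) | MeasurableSpace.comap U inferInstance]) ω ∂μ := by
        refine integral_congr_ae ?_
        filter_upwards [hcond] with ω hω
        rw [hω]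
    _ = ∫ ω, (μ[(fun ω => U ω * (v ω * h ω)) | MeasurableSpace.comap U inferInstance]) ω ∂μ := by
        refine (integral_congr_ae ?_).symm
        exact condExp_stronglyMeasurable_mul_of_bound hmU hUsm hw₂ MU hboundU
    _ = ∫ ω, U ω * (v ω * h ω) ∂μ := integral_condExp hmU

/-- Population identification underlying the IPSW estimator under outcome-dependent
validation sampling: E[(S/κ(Z)) · (A·Y / g(X))] = E[Y₁], where Z = (X, A*, Y). -/
theorem ipsw_outcome_dependent_identification
    {Ω : Type*} [MeasurableSpace Ω] [StandardBorelSpace Ω]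
    (μ : Measure Ω) [IsProbabilityMeasure μ]
    {d : ℕ} (A S Y Y₁ Y₀ Astar : Ω → ℝ) (X : Ω → (Fin d → ℝ))
    (Z : Ω → (Fin d → ℝ) × ℝ × ℝ)
    (g : (Fin d → ℝ) → ℝ) (κ : (Fin d → ℝ) × ℝ × ℝ → ℝ) (c : ℝ)
    (hA : Measurable A) (hAval : ∀ ω, A ω = 0 ∨ A ω = 1)
    (hS : Measurable S) (hSval : ∀ ω, S ω = 0 ∨ S ω = 1)
    (hY₁ : Measurable Y₁) (hY₀ : Measurable Y₀)
    (hY₁b : ∃ M, ∀ ω, |Y₁ ω| ≤ M) (hY₀b : ∃ M, ∀ ω, |Y₀ ω| ≤ M)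
    (hYdef : ∀ ω, Y ω = A ω * Y₁ ω + (1 - A ω) * Y₀ ω)
    (hX : Measurable X) (hAstar : Measurable Astar)
    (hZdef : ∀ ω, Z ω = (X ω, Astar ω, Y ω)) (hZ : Measurable Z)
    (hg : Measurable g) (hκ : Measurable κ)
    (hCI : CondIndep (MeasurableSpace.comap X inferInstance)
      (MeasurableSpace.comap Y₁ inferInstance)
      (MeasurableSpace.comap A inferInstance)
      hX.comap_le μ)
    (hCIS : CondIndep (MeasurableSpace.comap Z inferInstance)
      (MeasurableSpace.comap A inferInstance)
      (MeasurableSpace.comap S inferInstance)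
      hZ.comap_le μ)
    (hc : 0 < c) (hc2 : c < 1/2)
    (hglb : ∀ x, c ≤ g x) (hgub : ∀ x, g x ≤ 1 - c)
    (hκlb : ∀ z, c ≤ κ z) (hκub : ∀ z, κ z ≤ 1)
    (hgver : (fun ω => g (X ω)) =ᵐ[μ] μ[A | MeasurableSpace.comap X inferInstance])
    (hκver : (fun ω => κ (Z ω)) =ᵐ[μ] μ[S | MeasurableSpace.comap Z inferInstance]) :
    ∫ ω, (S ω / κ (Z ω)) * (A ω * Y ω / g (X ω)) ∂μ = ∫ ω, Y₁ ω ∂μ := by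
  obtain ⟨M₁, hM₁⟩ := hY₁b
  obtain ⟨M₀, hM₀⟩ := hY₀b
  have hgpos : ∀ x, 0 < g x := fun x => lt_of_lt_of_le hc (hglb x)
  have hκpos : ∀ z, 0 < κ z := fun z => lt_of_lt_of_le hc (hκlb z)
  have hYb : ∀ ω, |Y ω| ≤ |M₁| + |M₀| := by
    intro ω
    rw [hYdef ω]
    rcases hAval ω with h0 | h1
    · rw [h0]
      simp only [zero_mul, zero_add, sub_zero, one_mul]
      calc |Y₀ ω| ≤ M₀ := hM₀ ω
        _ ≤ |M₀| := le_abs_self _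
        _ ≤ |M₁| + |M₀| := le_add_of_nonneg_left (abs_nonneg _)
    · rw [h1]
      simp only [one_mul, sub_self, zero_mul, add_zero]
      calc |Y₁ ω| ≤ M₁ := hM₁ ω
        _ ≤ |M₁| := le_abs_self _
        _ ≤ |M₁| + |M₀| := le_add_of_nonneg_right (abs_nonneg _)
  have hAY : ∀ ω, A ω * Y ω = A ω * Y₁ ω := by
    intro ω
    rw [hYdef ω]
    rcases hAval ω with h0 | h1 <;> rw [‹A ω = _›] <;> ring
  -- Step 1 : replace S by κ ∘ Z using conditional independence given σ(Z)
  have hhZ : Measurable[MeasurableSpace.comap Z inferInstance]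
      (fun ω => Y ω / (κ (Z ω) * g (X ω))) := by
    have hfun : (fun ω => Y ω / (κ (Z ω) * g (X ω)))
        = (fun z : (Fin d → ℝ) × ℝ × ℝ => z.2.2 / (κ z * g z.1)) ∘ Z := by
      funext ω
      simp [Function.comp, hZdef ω]
    rw [hfun]
    exact ((measurable_snd.comp measurable_snd).div
      (hκ.mul (hg.comp measurable_fst))).comp (comap_measurable Z)
  have hvZ : Measurable[MeasurableSpace.comap Z inferInstance] (fun ω => κ (Z ω)) :=
    hκ.comp (comap_measurable Z)
  have hhZb : ∀ ω, |Y ω / (κ (Z ω) * g (X ω))| ≤ (|M₁| + |M₀|) / (c * c) := by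
    intro ω
    have hpos : 0 < κ (Z ω) * g (X ω) := mul_pos (hκpos _) (hgpos _)
    rw [abs_div, abs_of_pos hpos]
    refine div_le_div₀ (by positivity) (hYb ω) (by positivity) ?_
    exact mul_le_mul (hκlb _) (hglb _) hc.le (hc.le.trans (hκlb _))
  have step1 := core_switch μ hZ.comap_le A S
      (fun ω => Y ω / (κ (Z ω) * g (X ω))) (fun ω => κ (Z ω)) hA hS hSval
      (MU := 1) (Mh := (|M₁| + |M₀|) / (c * c)) (Mv := 1)
      (fun ω => by rcases hAval ω with h0 | h1 <;> rw [‹A ω = _›] <;> norm_num)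
      hhZb
      (fun ω => by rw [abs_of_pos (hκpos _)]; exact hκub _)
      hhZ hvZ hCIS hκver
  -- Step 2 : replace A by g ∘ X using conditional independence given σ(X)
  have hhX : Measurable[MeasurableSpace.comap X inferInstance]
      (fun ω => 1 / g (X ω)) :=
    ((measurable_const.div hg)).comp (comap_measurable X)
  have hvX : Measurable[MeasurableSpace.comap X inferInstance] (fun ω => g (X ω)) :=
    hg.comp (comap_measurable X)
  have step2 := core_switch μ hX.comap_le Y₁ A
      (fun ω => 1 / g (X ω)) (fun ω => g (X ω)) hY₁ hA hAval
      (MU := |M₁|) (Mh := 1 / c) (Mv := 1)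
      (fun ω => (hM₁ ω).trans (le_abs_self _))
      (fun ω => by
        rw [abs_div, abs_of_pos (hgpos _), abs_one]
        exact one_div_le_one_div_of_le hc (hglb _))
      (fun ω => by
        rw [abs_of_pos (hgpos _)]
        linarith [hgub (X ω), hc.le])
      hhX hvX hCI hgver
  -- Assemble
  calc ∫ ω, (S ω / κ (Z ω)) * (A ω * Y ω / g (X ω)) ∂μ
      = ∫ ω, A ω * (S ω * (Y ω / (κ (Z ω) * g (X ω)))) ∂μ := by
        refine integral_congr_ae (Filter.Eventually.of_forall fun ω => ?_)
        have hκne : κ (Z ω) ≠ 0 := (hκpos _).ne'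
        have hgne : g (X ω) ≠ 0 := (hgpos _).ne'
        field_simp
    _ = ∫ ω, A ω * (κ (Z ω) * (Y ω / (κ (Z ω) * g (X ω)))) ∂μ := step1
    _ = ∫ ω, Y₁ ω * (A ω * (1 / g (X ω))) ∂μ := by
        refine integral_congr_ae (Filter.Eventually.of_forall fun ω => ?_)
        have hκne : κ (Z ω) ≠ 0 := (hκpos _).ne'
        have hgne : g (X ω) ≠ 0 := (hgpos _).ne'
        have hAYω := hAY ω
        have h1 : κ (Z ω) * (Y ω / (κ (Z ω) * g (X ω))) = Y ω / g (X ω) := by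
          field_simp
        simp only []
        rw [h1, ← mul_div_assoc, hAYω]
        ring
    _ = ∫ ω, Y₁ ω * (g (X ω) * (1 / g (X ω))) ∂μ := step2
    _ = ∫ ω, Y₁ ω ∂μ := by
        refine integral_congr_ae (Filter.Eventually.of_forall fun ω => ?_)
        have h1 : g (X ω) * (1 / g (X ω)) = 1 := by
          rw [mul_one_div, div_self (hgpos (X ω)).ne']
        simp only []
        rw [h1, mul_one]
end
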